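/- arXiv:1904.09915 — 10 statements merged into one kernel-verified Lean document; each statement's English description precedes it below -/
import Mathlib

section
/- Let n ≥ 1 and let A be a real symmetric (2n+1)×(2n+1) semi-bipartite block matrix with parts V₁ (of size n+1) and V₂ (of size n). Let a, b ∈ V₁ be distinct indices such that det(A₋ₐ) ≠ 0 and det(A₋ᵦ) ≠ 0. For each v ∈ V₁ let f_v : [0,1] → ℝ be a continuous function such that: f_a(0) = 0; f_b(1) = 0; f_v(t) ≠ 0 for every t ∈ [0,1] and every v ∈ V₁ \ {a,b}; and there is no t ∈ [0,1] with f_a(t) = 0 and f_b(t) = 0 simultaneously. For t ∈ [0,1] let F(t) be the diagonal matrix with diagonal entry f_v(t) at each v ∈ V₁ and 1 at each v ∈ V₂, and set H(t) = F(t) A F(t). Then for every t ∈ [0,1] the kernel of H(t) is one-dimensional and every vector in it vanishes on all coordinates in V₂; moreover ker H(0) is spanned by the standard basis vector e_a and ker H(1) is spanned by the standard basis vector e_b. -/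
open Matrix

private lemma sum_split_ne {ι : Type*} [Fintype ι] [DecidableEq ι] (c : ι) (g : ι → ℝ) :
    ∑ w, g w = g c + ∑ j : {w : ι // w ≠ c}, g (j : ι) := by
  have h1 : ∑ x ∈ Finset.univ.erase c, g x = ∑ j : {w : ι // w ≠ c}, g (j : ι) :=
    Finset.sum_subtype _ (fun x => by simp) g
  rw [← h1, Finset.add_sum_erase _ g (Finset.mem_univ c)]

private lemma ker_restrict {n : ℕ}
    (A : Matrix (Fin (n + 1) ⊕ Fin n) (Fin (n + 1) ⊕ Fin n) ℝ) (p : Fin (n + 1))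
    (hp : (A.submatrix
        (fun i : {w : Fin (n + 1) ⊕ Fin n // w ≠ Sum.inl p} => (i : Fin (n + 1) ⊕ Fin n))
        (fun j : {w : Fin (n + 1) ⊕ Fin n // w ≠ Sum.inl p} => (j : Fin (n + 1) ⊕ Fin n))).det ≠ 0)
    (u : Fin (n + 1) ⊕ Fin n → ℝ) (hu0 : u (Sum.inl p) = 0)
    (hrow : ∀ w, w ≠ Sum.inl p → A.mulVec u w = 0) : u = 0 := by
  have key : ∀ i : {w : Fin (n + 1) ⊕ Fin n // w ≠ Sum.inl p},
      ∑ j : {w : Fin (n + 1) ⊕ Fin n // w ≠ Sum.inl p},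
        A (i : Fin (n + 1) ⊕ Fin n) (j : Fin (n + 1) ⊕ Fin n) * u (j : Fin (n + 1) ⊕ Fin n)
        = 0 := by
    intro i
    have hs := sum_split_ne (Sum.inl p) (fun w => A (i : Fin (n + 1) ⊕ Fin n) w * u w)
    have hfull := hrow (i : Fin (n + 1) ⊕ Fin n) i.2
    simp only [Matrix.mulVec, dotProduct] at hfull
    simp only [hfull, hu0, mul_zero, zero_add] at hs
    exact hs.symm
  have hz : (A.submatrix
      (fun i : {w : Fin (n + 1) ⊕ Fin n // w ≠ Sum.inl p} => (i : Fin (n + 1) ⊕ Fin n))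
      (fun j : {w : Fin (n + 1) ⊕ Fin n // w ≠ Sum.inl p} => (j : Fin (n + 1) ⊕ Fin n))).mulVec
      (fun j => u (j : Fin (n + 1) ⊕ Fin n)) = 0 := by
    funext i
    simpa [Matrix.mulVec, dotProduct, Matrix.submatrix_apply] using key i
  have h0 := Matrix.eq_zero_of_mulVec_eq_zero hp hz
  funext w
  by_cases hw : w = Sum.inl p
  · rw [hw]; exact hu0
  · exact congrFun h0 ⟨w, hw⟩

/-- STIRAP-like transfer: under the control scheme, the kernel of `H t` is
one-dimensional, supported on `V₁`, and localized at `a` at `t = 0` and at `b` at `t = 1`. -/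
theorem stirap_transfer (n : ℕ) (hn : 1 ≤ n)
    (A : Matrix (Fin (n + 1) ⊕ Fin n) (Fin (n + 1) ⊕ Fin n) ℝ)
    (hsymm : A.IsSymm)
    (hbip : ∀ u v : Fin (n + 1), A (Sum.inl u) (Sum.inl v) = 0)
    (a b : Fin (n + 1)) (hab : a ≠ b)
    (ha : (A.submatrix
        (fun i : {w : Fin (n + 1) ⊕ Fin n // w ≠ Sum.inl a} => (i : Fin (n + 1) ⊕ Fin n))
        (fun j : {w : Fin (n + 1) ⊕ Fin n // w ≠ Sum.inl a} => (j : Fin (n + 1) ⊕ Fin n))).det ≠ 0)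
    (hb : (A.submatrix
        (fun i : {w : Fin (n + 1) ⊕ Fin n // w ≠ Sum.inl b} => (i : Fin (n + 1) ⊕ Fin n))
        (fun j : {w : Fin (n + 1) ⊕ Fin n // w ≠ Sum.inl b} => (j : Fin (n + 1) ⊕ Fin n))).det ≠ 0)
    (f : Fin (n + 1) → ℝ → ℝ)
    (hf : ∀ v, ContinuousOn (f v) (Set.Icc 0 1))
    (hfa0 : f a 0 = 0) (hfb1 : f b 1 = 0)
    (hfother : ∀ v : Fin (n + 1), v ≠ a → v ≠ b → ∀ t ∈ Set.Icc (0 : ℝ) 1, f v t ≠ 0)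
    (hnotboth : ∀ t ∈ Set.Icc (0 : ℝ) 1, ¬ (f a t = 0 ∧ f b t = 0))
    (F : ℝ → Matrix (Fin (n + 1) ⊕ Fin n) (Fin (n + 1) ⊕ Fin n) ℝ)
    (hF : ∀ t, F t = Matrix.diagonal (Sum.elim (fun v => f v t) (fun _ => (1 : ℝ))))
    (H : ℝ → Matrix (Fin (n + 1) ⊕ Fin n) (Fin (n + 1) ⊕ Fin n) ℝ)
    (hH : ∀ t, H t = F t * A * F t) :
    (∀ t ∈ Set.Icc (0 : ℝ) 1,
      Module.finrank ℝ (LinearMap.ker (H t).mulVecLin) = 1 ∧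
      ∀ z ∈ LinearMap.ker (H t).mulVecLin, ∀ w : Fin n, z (Sum.inr w) = 0) ∧
    LinearMap.ker (H 0).mulVecLin
      = Submodule.span ℝ {Pi.single (Sum.inl a) (1 : ℝ)} ∧
    LinearMap.ker (H 1).mulVecLin
      = Submodule.span ℝ {Pi.single (Sum.inl b) (1 : ℝ)} := by
  classical
  set d : ℝ → (Fin (n + 1) ⊕ Fin n) → ℝ :=
    fun t => Sum.elim (fun v => f v t) (fun _ => 1) with hd
  -- action of H t
  have hHmul : ∀ t z, (H t).mulVec z
      = fun w => d t w * (A.mulVec (fun x => d t x * z x)) w := by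
    intro t z
    rw [hH t, hF t]
    have h1 : (Matrix.diagonal (d t)) *ᵥ z = fun x => d t x * z x :=
      funext fun x => Matrix.mulVec_diagonal _ _ _
    funext w
    rw [← Matrix.mulVec_mulVec, ← Matrix.mulVec_mulVec, h1, Matrix.mulVec_diagonal]
  have hmem : ∀ t z, z ∈ LinearMap.ker (H t).mulVecLin
      ↔ ∀ w, d t w * (A.mulVec (fun x => d t x * z x)) w = 0 := by
    intro t z
    rw [LinearMap.mem_ker, Matrix.mulVecLin_apply, hHmul t z]
    constructor
    · intro h w; exact congrFun h w
    · intro h; funext w; exact h w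
  -- the case where f p t = 0 for p ∈ {a, b}
  have hker0 : ∀ (p : Fin (n + 1)) (t : ℝ),
      (A.submatrix
        (fun i : {w : Fin (n + 1) ⊕ Fin n // w ≠ Sum.inl p} => (i : Fin (n + 1) ⊕ Fin n))
        (fun j : {w : Fin (n + 1) ⊕ Fin n // w ≠ Sum.inl p} => (j : Fin (n + 1) ⊕ Fin n))).det ≠ 0 →
      f p t = 0 → (∀ v, v ≠ p → f v t ≠ 0) →
      LinearMap.ker (H t).mulVecLin = Submodule.span ℝ {Pi.single (Sum.inl p) (1 : ℝ)} := by
    intro p t hp hpt hother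
    have hdzero : d t (Sum.inl p) = 0 := by simp [hd, hpt]
    have hdne : ∀ w, w ≠ Sum.inl p → d t w ≠ 0 := by
      rintro (v | j) hw
      · exact hother v (fun h => hw (by rw [h]))
      · simp [hd]
    apply le_antisymm
    · intro z hz
      rw [hmem] at hz
      have hu0 : (fun x => d t x * z x) (Sum.inl p) = 0 := by simp [hdzero]
      have hrow : ∀ w, w ≠ Sum.inl p → A.mulVec (fun x => d t x * z x) w = 0 := fun w hw =>
        (mul_eq_zero.mp (hz w)).resolve_left (hdne w hw)
      have huz := ker_restrict A p hp _ hu0 hrow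
      have hzw : ∀ w, w ≠ Sum.inl p → z w = 0 := by
        intro w hw
        have h1 : d t w * z w = 0 := congrFun huz w
        exact (mul_eq_zero.mp h1).resolve_left (hdne w hw)
      have hzs : z = z (Sum.inl p) • (Pi.single (Sum.inl p) (1 : ℝ) : (Fin (n + 1) ⊕ Fin n) → ℝ) := by
        funext w
        by_cases hw : w = Sum.inl p
        · rw [hw]; simp
        · simp [hzw w hw, Pi.single_eq_of_ne hw]
      rw [hzs]
      exact Submodule.smul_mem _ _ (Submodule.mem_span_singleton_self _)
    · rw [Submodule.span_le, Set.singleton_subset_iff, SetLike.mem_coe, hmem]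
      intro w
      have h0 : (fun x => d t x * (Pi.single (Sum.inl p) (1 : ℝ) : (Fin (n + 1) ⊕ Fin n) → ℝ) x)
          = (0 : (Fin (n + 1) ⊕ Fin n) → ℝ) := by
        funext x
        by_cases hx : x = Sum.inl p
        · rw [hx]; simp [hdzero]
        · simp [Pi.single_eq_of_ne hx]
      rw [h0]
      simp
  -- a nonzero kernel vector of A supported on V₁
  have hexists : ∃ x₀ : Fin (n + 1) → ℝ, x₀ ≠ 0 ∧
      ∀ j, ∑ v, A (Sum.inl v) (Sum.inr j) * x₀ v = 0 := by
    set Bt : Matrix (Fin n) (Fin (n + 1)) ℝ :=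
      Matrix.of fun j v => A (Sum.inl v) (Sum.inr j) with hBt
    have hk : LinearMap.ker Bt.mulVecLin ≠ ⊥ := by
      intro hbot
      have h1 := LinearMap.finrank_range_add_finrank_ker Bt.mulVecLin
      rw [hbot, finrank_bot, add_zero] at h1
      have h2 : Module.finrank ℝ (LinearMap.range Bt.mulVecLin)
          ≤ Module.finrank ℝ (Fin n → ℝ) := Submodule.finrank_le _
      rw [h1] at h2
      simp only [Module.finrank_pi, Fintype.card_fin] at h2
      omega
    obtain ⟨x₀, hmem', hne⟩ := Submodule.ne_bot_iff _ |>.mp hk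
    refine ⟨x₀, hne, fun j => ?_⟩
    have h3 : Bt.mulVec x₀ = 0 := by simpa [Matrix.mulVecLin_apply] using hmem'
    have h4 := congrFun h3 j
    simpa [Matrix.mulVec, dotProduct, hBt] using h4
  obtain ⟨x₀, hx₀ne, hBx₀⟩ := hexists
  set z₀ : (Fin (n + 1) ⊕ Fin n) → ℝ := Sum.elim x₀ (fun _ => 0) with hz₀def
  have hz₀ : A.mulVec z₀ = 0 := by
    funext w
    show ∑ x, A w x * z₀ x = 0
    rw [Fintype.sum_sum_type]
    cases w with
    | inl v => simp [hz₀def, hbip]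
    | inr j =>
      have hsy : ∀ v, A (Sum.inr j) (Sum.inl v) = A (Sum.inl v) (Sum.inr j) := fun v =>
        hsymm.apply _ _
      simpa [hz₀def, hsy] using hBx₀ j
  have hz₀ne : z₀ ≠ 0 := fun h => hx₀ne (funext fun v => congrFun h (Sum.inl v))
  have hz₀a : z₀ (Sum.inl a) ≠ 0 := by
    intro h0
    exact hz₀ne (ker_restrict A a ha z₀ h0 (fun w _ => by rw [hz₀]; rfl))
  have hz₀inr : ∀ j, z₀ (Sum.inr j) = 0 := fun j => rfl
  -- the case where all entries of d are nonzero
  have hker1 : ∀ t : ℝ, (∀ w, d t w ≠ 0) →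
      ∃ w₀ : (Fin (n + 1) ⊕ Fin n) → ℝ, w₀ ≠ 0 ∧ (∀ j, w₀ (Sum.inr j) = 0) ∧
        LinearMap.ker (H t).mulVecLin = Submodule.span ℝ {w₀} := by
    intro t hdne
    refine ⟨fun w => z₀ w / d t w, ?_, ?_, ?_⟩
    · intro h
      apply hz₀a
      have h1 : z₀ (Sum.inl a) / d t (Sum.inl a) = 0 := congrFun h (Sum.inl a)
      exact (div_eq_zero_iff.mp h1).resolve_right (hdne _)
    · intro j; show z₀ (Sum.inr j) / d t (Sum.inr j) = 0
      rw [hz₀inr j, zero_div]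
    · apply le_antisymm
      · intro z hz
        rw [hmem] at hz
        have hAu : A.mulVec (fun x => d t x * z x) = 0 :=
          funext fun w => (mul_eq_zero.mp (hz w)).resolve_left (hdne w)
        set c : ℝ := (d t (Sum.inl a) * z (Sum.inl a)) / z₀ (Sum.inl a) with hc
        have key : (fun x => d t x * z x) = c • z₀ := by
          have h1 : A.mulVec ((fun x => d t x * z x) - c • z₀) = 0 := by
            rw [Matrix.mulVec_sub, hAu, Matrix.mulVec_smul, hz₀]
            simp
          have h2 : ((fun x => d t x * z x) - c • z₀) (Sum.inl a) = 0 := by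
            simp only [Pi.sub_apply, Pi.smul_apply, smul_eq_mul, hc]
            rw [div_mul_cancel₀ _ hz₀a, sub_self]
          have h3 := ker_restrict A a ha _ h2 (fun w _ => by rw [h1]; rfl)
          exact sub_eq_zero.mp h3
        have hzc : z = c • (fun w => z₀ w / d t w) := by
          funext w
          have hu : d t w * z w = c * z₀ w := by
            have := congrFun key w
            simpa using this
          rw [Pi.smul_apply, smul_eq_mul, mul_div_assoc', eq_div_iff (hdne w), mul_comm (z w)]
          exact hu.symm ▸ rfl
        rw [hzc]
        exact Submodule.smul_mem _ _ (Submodule.mem_span_singleton_self _)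
      · rw [Submodule.span_le, Set.singleton_subset_iff, SetLike.mem_coe, hmem]
        intro w
        have hdw : (fun x => d t x * (z₀ x / d t x)) = z₀ := by
          funext x
          rw [mul_div_assoc', mul_div_cancel_left₀ _ (hdne x)]
        rw [hdw, hz₀]
        simp
  -- assembling
  have hone : ∀ p : Fin (n + 1), (Pi.single (Sum.inl p) (1 : ℝ)
      : (Fin (n + 1) ⊕ Fin n) → ℝ) ≠ 0 := by
    intro p h
    have := congrFun h (Sum.inl p)
    simp at this
  refine ⟨?_, ?_, ?_⟩
  · intro t ht
    by_cases hat : f a t = 0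
    · have hbt : f b t ≠ 0 := fun h => hnotboth t ht ⟨hat, h⟩
      have hother : ∀ v, v ≠ a → f v t ≠ 0 := by
        intro v hv
        by_cases hvb : v = b
        · rw [hvb]; exact hbt
        · exact hfother v hv hvb t ht
      have hEq := hker0 a t ha hat hother
      rw [hEq]
      refine ⟨finrank_span_singleton (hone a), ?_⟩
      intro z hz j
      rcases Submodule.mem_span_singleton.mp hz with ⟨cc, rfl⟩
      simp [Pi.single_eq_of_ne (show (Sum.inr j : Fin (n + 1) ⊕ Fin n) ≠ Sum.inl a by simp)]
    · by_cases hbt : f b t = 0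
      · have hother : ∀ v, v ≠ b → f v t ≠ 0 := by
          intro v hv
          by_cases hva : v = a
          · rw [hva]; exact hat
          · exact hfother v hva hv t ht
        have hEq := hker0 b t hb hbt hother
        rw [hEq]
        refine ⟨finrank_span_singleton (hone b), ?_⟩
        intro z hz j
        rcases Submodule.mem_span_singleton.mp hz with ⟨cc, rfl⟩
        simp [Pi.single_eq_of_ne (show (Sum.inr j : Fin (n + 1) ⊕ Fin n) ≠ Sum.inl b by simp)]
      · have hdne : ∀ w, d t w ≠ 0 := by
          rintro (v | j)
          · by_cases hva : v = a
            · rw [hva]; exact hat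
            · by_cases hvb : v = b
              · rw [hvb]; exact hbt
              · exact hfother v hva hvb t ht
          · simp [hd]
        obtain ⟨w₀, hw0, hinr, hEq⟩ := hker1 t hdne
        rw [hEq]
        refine ⟨finrank_span_singleton hw0, ?_⟩
        intro z hz j
        rcases Submodule.mem_span_singleton.mp hz with ⟨cc, rfl⟩
        simp [hinr j]
  · have ht0 : (0 : ℝ) ∈ Set.Icc (0 : ℝ) 1 := ⟨le_refl 0, zero_le_one⟩
    have hbt : f b 0 ≠ 0 := fun h => hnotboth 0 ht0 ⟨hfa0, h⟩
    refine hker0 a 0 ha hfa0 ?_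
    intro v hv
    by_cases hvb : v = b
    · rw [hvb]; exact hbt
    · exact hfother v hv hvb 0 ht0
  · have ht1 : (1 : ℝ) ∈ Set.Icc (0 : ℝ) 1 := ⟨zero_le_one, le_refl 1⟩
    have hat : f a 1 ≠ 0 := fun h => hnotboth 1 ht1 ⟨h, hfb1⟩
    refine hker0 b 1 hb hfb1 ?_
    intro v hv
    by_cases hva : v = a
    · rw [hva]; exact hat
    · exact hfother v hva hv 1 ht1
end

section
/- Let n ≥ 1, let A be a real symmetric (2n+1)×(2n+1) semi-bipartite block matrix with parts V₁ (of size n+1) and V₂ (of size n), and let p ∈ V₁. Then the following are equivalent: (a) det(A₋ₚ) ≠ 0; (b) the kernel of A is one-dimensional and every nonzero vector in the kernel of A has nonzero coordinate at p. -/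
open Matrix

/-- Equivalence of the two conditions of the main theorem: for a semi-bipartite
matrix `A` with `|V₁| = |V₂| + 1` and `p ∈ V₁`, `det (A - p) ≠ 0` iff `A` has a
one-dimensional kernel all of whose nonzero vectors have nonzero amplitude at `p`. -/
theorem semiBipartite_det_ne_zero_iff_unique_kernel (n : ℕ) (hn : 1 ≤ n)
    (A : Matrix (Fin (n + 1) ⊕ Fin n) (Fin (n + 1) ⊕ Fin n) ℝ)
    (hsymm : A.IsSymm)
    (hbip : ∀ u v : Fin (n + 1), A (Sum.inl u) (Sum.inl v) = 0)
    (p : Fin (n + 1)) :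
    (A.submatrix
        (fun i : {w : Fin (n + 1) ⊕ Fin n // w ≠ Sum.inl p} => (i : Fin (n + 1) ⊕ Fin n))
        (fun j : {w : Fin (n + 1) ⊕ Fin n // w ≠ Sum.inl p} => (j : Fin (n + 1) ⊕ Fin n))).det ≠ 0
    ↔ (Module.finrank ℝ (LinearMap.ker A.mulVecLin) = 1 ∧
        ∀ z ∈ LinearMap.ker A.mulVecLin, z ≠ 0 → z (Sum.inl p) ≠ 0) := by
  -- the kernel of A is nontrivial
  have hkerne : LinearMap.ker A.mulVecLin ≠ ⊥ := by
    set M : Matrix (Fin n) (Fin (n + 1)) ℝ := fun j u => A (Sum.inr j) (Sum.inl u) with hM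
    have hninj : ¬ Function.Injective M.mulVecLin := by
      intro hinj
      have := LinearMap.finrank_le_finrank_of_injective hinj
      simp [Module.finrank_pi] at this
    rw [Function.not_injective_iff] at hninj
    obtain ⟨x, y, hxy, hne⟩ := hninj
    have hz1 : M.mulVec (x - y) = 0 := by
      have : M.mulVecLin (x - y) = 0 := by rw [map_sub, hxy, sub_self]
      simpa using this
    set z : (Fin (n + 1) ⊕ Fin n) → ℝ := Sum.elim (x - y) 0 with hz
    have hzker : z ∈ LinearMap.ker A.mulVecLin := by
      rw [LinearMap.mem_ker]
      ext q
      simp only [mulVecLin_apply, mulVec, dotProduct, Pi.zero_apply]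
      rw [Fintype.sum_sum_type]
      cases q with
      | inl u => simp [hz, hbip]
      | inr j =>
        have := congrFun hz1 j
        simpa [mulVec, dotProduct, hz, hM] using this
    intro hbot
    rw [hbot, Submodule.mem_bot] at hzker
    apply hne
    apply sub_eq_zero.mp
    funext u
    exact congrFun hzker (Sum.inl u)
  set c : {w : Fin (n + 1) ⊕ Fin n // w ≠ Sum.inl p} → (Fin (n + 1) ⊕ Fin n) :=
    fun i => (i : Fin (n + 1) ⊕ Fin n) with hc
  constructor
  · intro hdet
    -- key: any kernel vector vanishing at p is zero
    have key : ∀ z ∈ LinearMap.ker A.mulVecLin, z (Sum.inl p) = 0 → z = 0 := by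
      intro z hz hzp
      have hz0 : A.mulVec z = 0 := by simpa [mulVecLin_apply] using hz
      set w : {w : Fin (n + 1) ⊕ Fin n // w ≠ Sum.inl p} → ℝ := fun i => z i.1 with hw
      have hwmul : (A.submatrix c c).mulVec w = 0 := by
        funext i
        have hsub : ∑ v ∈ Finset.univ.erase (Sum.inl p), A i.1 v * z v
            = ∑ j : {w : Fin (n + 1) ⊕ Fin n // w ≠ Sum.inl p}, A i.1 j.1 * z j.1 :=
          Finset.sum_subtype _ (by simp) _
        have herase : ∑ v ∈ Finset.univ.erase (Sum.inl p), A i.1 v * z v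
            = (∑ v, A i.1 v * z v) - A i.1 (Sum.inl p) * z (Sum.inl p) :=
          Finset.sum_erase_eq_sub (Finset.mem_univ _)
        have htot : ∑ v, A i.1 v * z v = 0 := congrFun hz0 i.1
        simp only [mulVec, dotProduct, submatrix_apply, Pi.zero_apply, hw, hc]
        rw [← hsub, herase, htot, hzp]
        ring
      have hw0 : w = 0 := by
        by_contra hw0
        exact hdet (Matrix.exists_mulVec_eq_zero_iff.mp ⟨w, hw0, hwmul⟩)
      funext v
      by_cases hv : v = Sum.inl p
      · rw [hv]; exact hzp
      · exact congrFun hw0 ⟨v, hv⟩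
    have hle : Module.finrank ℝ (LinearMap.ker A.mulVecLin) ≤ 1 := by
      set φ : LinearMap.ker A.mulVecLin →ₗ[ℝ] ℝ :=
        { toFun := fun z => (z : (Fin (n + 1) ⊕ Fin n) → ℝ) (Sum.inl p)
          map_add' := by intros; rfl
          map_smul' := by intros; rfl } with hφ
      have hφinj : Function.Injective φ := by
        intro a b hab
        have := key ((a : (Fin (n + 1) ⊕ Fin n) → ℝ) - b) (by
          simpa using Submodule.sub_mem _ a.2 b.2) (by
          simpa [hφ] using sub_eq_zero.mpr hab)
        exact Subtype.ext (sub_eq_zero.mp this)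
      simpa using LinearMap.finrank_le_finrank_of_injective hφinj
    have hge : 0 < Module.finrank ℝ (LinearMap.ker A.mulVecLin) := by
      rw [Nat.pos_iff_ne_zero]
      intro h0
      exact hkerne (Submodule.finrank_eq_zero.mp h0)
    refine ⟨le_antisymm hle hge, ?_⟩
    intro z hz hzne hzp
    exact hzne (key z hz hzp)
  · rintro ⟨hfr, hp⟩ hdet
    obtain ⟨w, hwne, hwmul⟩ := Matrix.exists_mulVec_eq_zero_iff.mpr hdet
    -- extend w by zero at p
    set zh : (Fin (n + 1) ⊕ Fin n) → ℝ :=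
      fun v => if h : v = Sum.inl p then 0 else w ⟨v, h⟩ with hzh
    have hzhp : zh (Sum.inl p) = 0 := by simp [hzh]
    -- A zh vanishes off p
    have hoff : ∀ q : Fin (n + 1) ⊕ Fin n, q ≠ Sum.inl p → A.mulVec zh q = 0 := by
      intro q hq
      have hthis : ∑ j : {w : Fin (n + 1) ⊕ Fin n // w ≠ Sum.inl p}, A q j.1 * w j = 0 := by
        have := congrFun hwmul ⟨q, hq⟩
        simpa [mulVec, dotProduct, hc] using this
      have hsub : ∑ v ∈ Finset.univ.erase (Sum.inl p), A q v * zh v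
          = ∑ j : {w : Fin (n + 1) ⊕ Fin n // w ≠ Sum.inl p}, A q j.1 * zh j.1 :=
        Finset.sum_subtype _ (by simp) _
      have herase : ∑ v ∈ Finset.univ.erase (Sum.inl p), A q v * zh v
          = (∑ v, A q v * zh v) - A q (Sum.inl p) * zh (Sum.inl p) :=
        Finset.sum_erase_eq_sub (Finset.mem_univ _)
      have e2 : ∑ j : {w : Fin (n + 1) ⊕ Fin n // w ≠ Sum.inl p}, A q j.1 * zh j.1
          = ∑ j : {w : Fin (n + 1) ⊕ Fin n // w ≠ Sum.inl p}, A q j.1 * w j := by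
        apply Finset.sum_congr rfl
        intro j _
        congr 1
        simp [hzh, j.2]
      have : (∑ v, A q v * zh v) - A q (Sum.inl p) * zh (Sum.inl p) = 0 := by
        rw [← herase, hsub, e2, hthis]
      simp only [mulVec, dotProduct]
      rw [hzhp] at this
      linarith
    -- pick a nonzero kernel vector
    obtain ⟨x, hx, hxne⟩ := Submodule.exists_mem_ne_zero_of_ne_bot hkerne
    have hxp : x (Sum.inl p) ≠ 0 := hp x hx hxne
    have hx0 : A.mulVec x = 0 := by simpa [mulVecLin_apply] using hx
    -- symmetry gives x ⬝ A zh = 0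
    have hdot : x ⬝ᵥ A.mulVec zh = 0 := by
      rw [Matrix.dotProduct_mulVec, ← Matrix.mulVec_transpose, hsymm.eq, hx0]
      simp
    have hdot2 : x ⬝ᵥ A.mulVec zh = x (Sum.inl p) * A.mulVec zh (Sum.inl p) := by
      unfold dotProduct
      apply Finset.sum_eq_single
      · intro q _ hq
        rw [hoff q hq, mul_zero]
      · intro h
        exact absurd (Finset.mem_univ _) h
    have hAzh : A.mulVec zh = 0 := by
      funext q
      by_cases hq : q = Sum.inl p
      · subst hq
        have := hdot2.symm.trans hdot
        exact (mul_eq_zero.mp this).resolve_left hxp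
      · exact hoff q hq
    have hzhker : zh ∈ LinearMap.ker A.mulVecLin := by
      rw [LinearMap.mem_ker]
      simpa [mulVecLin_apply] using hAzh
    have hzh0 : zh = 0 := by
      by_contra h0
      exact hp zh hzhker h0 hzhp
    apply hwne
    funext i
    have := congrFun hzh0 i.1
    simpa [hzh, i.2] using this
end

section
/- Let n ≥ 1, let A be a real symmetric (2n+1)×(2n+1) semi-bipartite block matrix with parts V₁ (of size n+1) and V₂ (of size n), and let p ∈ V₁. If det(A₋ₚ) = 0, then there exists a nonzero vector z with A z = 0 whose coordinate at p is zero. -/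
open Matrix

/-- If `det (A - p) = 0` for a semi-bipartite matrix `A` with `|V₁| = |V₂| + 1`
and `p ∈ V₁`, then `A` has a nonzero kernel vector vanishing at `p`. -/
theorem semiBipartite_exists_kernel_vector_vanishing_at_p (n : ℕ) (hn : 1 ≤ n)
    (A : Matrix (Fin (n + 1) ⊕ Fin n) (Fin (n + 1) ⊕ Fin n) ℝ)
    (hsymm : A.IsSymm)
    (hbip : ∀ u v : Fin (n + 1), A (Sum.inl u) (Sum.inl v) = 0)
    (p : Fin (n + 1))
    (hdet : (A.submatrix
        (fun i : {w : Fin (n + 1) ⊕ Fin n // w ≠ Sum.inl p} => (i : Fin (n + 1) ⊕ Fin n))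
        (fun j : {w : Fin (n + 1) ⊕ Fin n // w ≠ Sum.inl p} => (j : Fin (n + 1) ⊕ Fin n))).det
        = 0) :
    ∃ z : (Fin (n + 1) ⊕ Fin n) → ℝ, z ≠ 0 ∧ A.mulVec z = 0 ∧ z (Sum.inl p) = 0 := by
  classical
  let e : Fin n ≃ { u : Fin (n + 1) // u ≠ p } := finSuccAboveEquiv p
  let g : Fin n ⊕ Fin n → Fin (n + 1) ⊕ Fin n :=
    Sum.elim (fun i => Sum.inl (p.succAbove i)) Sum.inr
  have hg_ne : ∀ w, g w ≠ Sum.inl p := by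
    rintro (i | j) h
    · exact p.succAbove_ne i (Sum.inl.inj h)
    · exact Sum.inr_ne_inl h
  have hg_inj : Function.Injective
      (fun w => (⟨g w, hg_ne w⟩ : { w : Fin (n + 1) ⊕ Fin n // w ≠ Sum.inl p })) := by
    rintro (i | j) (i' | j') h
    · exact congrArg Sum.inl
        (p.succAbove_right_injective (Sum.inl.inj (congrArg Subtype.val h)))
    · exact absurd (congrArg Subtype.val h) Sum.inl_ne_inr
    · exact absurd (congrArg Subtype.val h) Sum.inr_ne_inl
    · exact congrArg Sum.inr (Sum.inr.inj (congrArg Subtype.val h))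
  have hcard : Fintype.card (Fin n ⊕ Fin n)
      = Fintype.card { w : Fin (n + 1) ⊕ Fin n // w ≠ Sum.inl p } := by
    simp [Fintype.card_subtype_compl]
  let E : (Fin n ⊕ Fin n) ≃ { w : Fin (n + 1) ⊕ Fin n // w ≠ Sum.inl p } :=
    Equiv.ofBijective _ ((Fintype.bijective_iff_injective_and_card _).mpr ⟨hg_inj, hcard⟩)
  -- the reindexed deleted matrix
  have hdet' : (A.submatrix g g).det = 0 := by
    have h := Matrix.det_submatrix_equiv_self E
      (A.submatrix
        (fun i : {w : Fin (n + 1) ⊕ Fin n // w ≠ Sum.inl p} => (i : Fin (n + 1) ⊕ Fin n))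
        (fun j : {w : Fin (n + 1) ⊕ Fin n // w ≠ Sum.inl p} => (j : Fin (n + 1) ⊕ Fin n)))
    rw [Matrix.submatrix_submatrix] at h
    rw [show ((fun i : {w : Fin (n + 1) ⊕ Fin n // w ≠ Sum.inl p} =>
        (i : Fin (n + 1) ⊕ Fin n)) ∘ E) = g from rfl] at h
    rw [h, hdet]
  obtain ⟨y, hy0, hy⟩ := (Matrix.exists_mulVec_eq_zero_iff).mpr hdet'
  -- the bipartite block
  let T : Matrix (Fin n) (Fin n) ℝ := fun i j => A (Sum.inr j) (Sum.inl (p.succAbove i))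
  have hT : ∀ i j, A (Sum.inl (p.succAbove i)) (Sum.inr j) = T i j := fun i j =>
    (hsymm.apply (Sum.inl (p.succAbove i)) (Sum.inr j)).symm
  -- kernel equations
  have hker1 : ∀ i, ∑ j, T i j * y (Sum.inr j) = 0 := by
    intro i
    have h := congrFun hy (Sum.inl i)
    simp only [Matrix.mulVec, dotProduct, Fintype.sum_sum_type,
      Matrix.submatrix_apply, Sum.elim_inl, Sum.elim_inr, g, hbip, zero_mul,
      Finset.sum_const_zero, zero_add, Pi.zero_apply, hT] at h
    exact h
  have hker2 : ∀ j, (∑ i, T i j * y (Sum.inl i))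
      + ∑ j', A (Sum.inr j) (Sum.inr j') * y (Sum.inr j') = 0 := by
    intro j
    have h := congrFun hy (Sum.inr j)
    simpa [Matrix.mulVec, dotProduct, Fintype.sum_sum_type, g, T] using h
  -- get x ≠ 0 with ∀ j, ∑ i, T i j * x i = 0
  have hx : ∃ x : Fin n → ℝ, x ≠ 0 ∧ ∀ j, ∑ i, T i j * x i = 0 := by
    by_cases hyr : (fun j => y (Sum.inr j)) = 0
    · refine ⟨fun i => y (Sum.inl i), ?_, ?_⟩
      · intro h
        apply hy0
        funext w
        rcases w with i | j
        · exact congrFun h i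
        · exact congrFun hyr j
      · intro j
        have h2 := hker2 j
        have hz : ∑ j', A (Sum.inr j) (Sum.inr j') * y (Sum.inr j') = 0 := by
          apply Finset.sum_eq_zero
          intro j' _
          rw [show y (Sum.inr j') = 0 from congrFun hyr j', mul_zero]
        rw [hz, add_zero] at h2
        exact h2
    · have hdetT : T.det = 0 := by
        rw [← Matrix.exists_mulVec_eq_zero_iff]
        refine ⟨fun j => y (Sum.inr j), hyr, ?_⟩
        funext i
        simpa [Matrix.mulVec, dotProduct] using hker1 i
      have hdetTt : Tᵀ.det = 0 := by rw [Matrix.det_transpose]; exact hdetT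
      obtain ⟨x, hx0, hxk⟩ := (Matrix.exists_mulVec_eq_zero_iff).mpr hdetTt
      refine ⟨x, hx0, fun j => ?_⟩
      have h := congrFun hxk j
      simpa [Matrix.mulVec, dotProduct, Matrix.transpose_apply, mul_comm] using h
  obtain ⟨x, hx0, hxk⟩ := hx
  -- build z
  refine ⟨fun w => Sum.elim (fun u => if h : u = p then 0 else x (e.symm ⟨u, h⟩)) (fun _ => 0) w,
    ?_, ?_, by simp⟩
  · -- z ≠ 0
    obtain ⟨i, hi⟩ := Function.ne_iff.mp hx0
    intro h
    apply hi
    have h1 := congrFun h (Sum.inl (p.succAbove i))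
    simp only [Sum.elim_inl, Pi.zero_apply, dif_neg (p.succAbove_ne i)] at h1
    rwa [show (⟨p.succAbove i, p.succAbove_ne i⟩ : {u : Fin (n+1) // u ≠ p}) = e i from rfl,
      Equiv.symm_apply_apply] at h1
  · -- A z = 0
    funext w
    rcases w with u | j
    · simp [Matrix.mulVec, dotProduct, Fintype.sum_sum_type, hbip]
    · simp only [Matrix.mulVec, dotProduct, Fintype.sum_sum_type, Sum.elim_inl,
        Sum.elim_inr, mul_zero, Finset.sum_const_zero, add_zero, Pi.zero_apply]
      rw [Fin.sum_univ_succAbove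
        (fun u : Fin (n+1) =>
          A (Sum.inr j) (Sum.inl u) * (if h : u = p then 0 else x (e.symm ⟨u, h⟩))) p]
      have hterm : ∀ i : Fin n,
          A (Sum.inr j) (Sum.inl (p.succAbove i))
            * (if h : p.succAbove i = p then 0 else x (e.symm ⟨p.succAbove i, h⟩))
          = T i j * x i := by
        intro i
        rw [dif_neg (p.succAbove_ne i)]
        congr 1
        rw [show (⟨p.succAbove i, p.succAbove_ne i⟩ : {u : Fin (n+1) // u ≠ p}) = e i from rfl,
          Equiv.symm_apply_apply]
      rw [Finset.sum_congr rfl (fun i _ => hterm i)]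
      simp [hxk j]
end

section
/- Let A be a real symmetric N×N matrix (N ≥ 3) and let u ≠ v be two of its indices such that A_{v w} = 0 for every index w ≠ u (in particular A_{vv} = 0) and A_{v u} ≠ 0 (i.e., v is a dangling vertex whose unique neighbour is u). Then the nullity of A equals the nullity of the principal submatrix A₋₍ᵤ,ᵥ₎ obtained by deleting the rows and columns indexed by u and v. -/
open Matrix

private lemma sum_split_uv {N : ℕ} (u v : Fin N) (huv : u ≠ v) (f : Fin N → ℝ) :
    ∑ j, f j = f u + f v + ∑ i : {w : Fin N // w ≠ u ∧ w ≠ v}, f (i : Fin N) := by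
  classical
  have h1 : (({u, v} : Finset (Fin N)).sum f) = f u + f v := Finset.sum_pair huv
  have h2 : ∑ j ∈ (({u, v} : Finset (Fin N))ᶜ), f j
      = ∑ i : {w : Fin N // w ≠ u ∧ w ≠ v}, f (i : Fin N) := by
    refine Finset.sum_subtype _ (fun x => ?_) f
    simp [not_or]
  rw [← Finset.sum_add_sum_compl ({u, v} : Finset (Fin N)) f, h1, h2]

/-- Removing a dangling vertex `v` together with its unique neighbour `u`
preserves the nullity of a real symmetric matrix. -/
theorem nullity_eq_of_dangling_vertex (N : ℕ) (hN : 3 ≤ N)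
    (A : Matrix (Fin N) (Fin N) ℝ) (hsymm : A.IsSymm)
    (u v : Fin N) (huv : u ≠ v)
    (hdang : ∀ w : Fin N, w ≠ u → A v w = 0) (hvu : A v u ≠ 0) :
    Module.finrank ℝ (LinearMap.ker A.mulVecLin) =
      Module.finrank ℝ (LinearMap.ker
        (A.submatrix
          (fun i : {w : Fin N // w ≠ u ∧ w ≠ v} => (i : Fin N))
          (fun j : {w : Fin N // w ≠ u ∧ w ≠ v} => (j : Fin N))).mulVecLin) := by
  classical
  set S := {w : Fin N // w ≠ u ∧ w ≠ v}
  set B := A.submatrix (fun i : S => (i : Fin N)) (fun j : S => (j : Fin N)) with hB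
  have hsym : ∀ i j, A j i = A i j := fun i j => congrFun (congrFun hsymm i) j
  -- row expansion
  have hrow : ∀ (x : Fin N → ℝ) (w : Fin N),
      A.mulVec x w = A w u * x u + A w v * x v + ∑ i : S, A w (i : Fin N) * x i := by
    intro x w
    simp only [Matrix.mulVec, dotProduct]
    exact sum_split_uv u v huv (fun j => A w j * x j)
  -- any kernel element of A vanishes at u
  have hker_u : ∀ x : Fin N → ℝ, A.mulVec x = 0 → x u = 0 := by
    intro x hx
    have hv : A.mulVec x v = 0 := congrFun hx v
    rw [hrow] at hv
    have hAvv : A v v = 0 := hdang v (Ne.symm huv)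
    have hsum : ∑ i : S, A v (i : Fin N) * x i = 0 := by
      apply Finset.sum_eq_zero
      intro i _
      rw [hdang _ i.2.1]; ring
    rw [hAvv, hsum] at hv
    have : A v u * x u = 0 := by linarith
    exact (mul_eq_zero.mp this).resolve_left hvu
  -- the restriction map sends ker A into ker B
  have hmaps : ∀ x ∈ LinearMap.ker A.mulVecLin,
      (LinearMap.funLeft ℝ ℝ (fun i : S => (i : Fin N))) x ∈ LinearMap.ker B.mulVecLin := by
    intro x hx
    have hx' : A.mulVec x = 0 := hx
    rw [LinearMap.mem_ker]
    ext w
    have hw : A.mulVec x (w : Fin N) = 0 := congrFun hx' w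
    rw [hrow] at hw
    have hxu : x u = 0 := hker_u x hx'
    have hAwv : A (w : Fin N) v = 0 := by rw [hsym]; exact hdang _ w.2.1
    simp only [mulVecLin_apply, Matrix.mulVec, dotProduct, LinearMap.funLeft_apply,
      Pi.zero_apply, hB, Matrix.submatrix_apply]
    rw [hxu, hAwv] at hw
    linarith
  set φ := (LinearMap.funLeft ℝ ℝ (fun i : S => (i : Fin N))).restrict hmaps with hφ
  have hinj : Function.Injective φ := by
    intro ⟨x, hx⟩ ⟨y, hy⟩ hxy
    have hres : ∀ i : S, x (i : Fin N) = y (i : Fin N) := by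
      intro i
      exact congrFun (congrArg Subtype.val hxy) i
    have hxu : x u = 0 := hker_u x hx
    have hyu : y u = 0 := hker_u y hy
    -- show x v = y v using row u
    have hxv : ∀ z : Fin N → ℝ, A.mulVec z = 0 →
        A u v * z v = - ∑ i : S, A u (i : Fin N) * z i := by
      intro z hz
      have h := congrFun hz u
      rw [hrow] at h
      simp only [Pi.zero_apply] at h
      have hzu : z u = 0 := hker_u z hz
      rw [hzu] at h
      linarith
    have hAuv : A u v ≠ 0 := by rw [← hsym]; exact hvu
    have hxy_v : x v = y v := by
      have h1 := hxv x hx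
      have h2 := hxv y hy
      have hsums : ∑ i : S, A u (i : Fin N) * x i = ∑ i : S, A u (i : Fin N) * y i :=
        Finset.sum_congr rfl fun i _ => by rw [hres i]
      have : A u v * x v = A u v * y v := by rw [h1, h2, hsums]
      exact mul_left_cancel₀ hAuv this
    ext j
    show x j = y j
    by_cases hju : j = u
    · rw [hju, hxu, hyu]
    · by_cases hjv : j = v
      · rw [hjv, hxy_v]
      · exact hres ⟨j, hju, hjv⟩
  have hsurj : Function.Surjective φ := by
    rintro ⟨y, hy⟩
    have hy' : B.mulVec y = 0 := hy
    have hAuv : A u v ≠ 0 := by rw [← hsym]; exact hvu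
    set c : ℝ := -(A u v)⁻¹ * ∑ i : S, A u (i : Fin N) * y i with hc
    set x : Fin N → ℝ := fun j =>
      if h1 : j = u then 0 else if h2 : j = v then c else y ⟨j, h1, h2⟩ with hx
    have hxu : x u = 0 := by simp [hx]
    have hxv : x v = c := by simp [hx, Ne.symm huv]
    have hxi : ∀ i : S, x (i : Fin N) = y i := by
      intro i
      simp [hx, i.2.1, i.2.2]
    have hxker : A.mulVec x = 0 := by
      ext w
      rw [hrow, hxu, hxv]
      simp only [Pi.zero_apply, mul_zero, zero_add]
      by_cases hwv : w = v
      · have h1 : A w v = 0 := by rw [hwv]; exact hdang v (Ne.symm huv)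
        have h2 : ∑ i : S, A w (i : Fin N) * x i = 0 :=
          Finset.sum_eq_zero fun i _ => by rw [hwv, hdang _ i.2.1]; ring
        rw [h1, h2]; ring
      · by_cases hwu : w = u
        · have h2 : ∑ i : S, A w (i : Fin N) * x i = ∑ i : S, A w (i : Fin N) * y i :=
            Finset.sum_congr rfl fun i _ => by rw [hxi i]
          rw [h2, hwu, hc, neg_mul, mul_neg, ← mul_assoc, mul_inv_cancel₀ hAuv, one_mul,
            neg_add_cancel]
        · have hAwv : A w v = 0 := by rw [hsym]; exact hdang _ hwu
          have h2 : ∑ i : S, A w (i : Fin N) * x i = 0 := by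
            have := congrFun hy' ⟨w, hwu, hwv⟩
            simp only [Matrix.mulVec, dotProduct, hB, Matrix.submatrix_apply,
              Pi.zero_apply] at this
            rw [Finset.sum_congr rfl fun i _ => by rw [hxi i]]
            exact this
          rw [hAwv, h2]; ring
    refine ⟨⟨x, hxker⟩, ?_⟩
    apply Subtype.ext
    ext i
    exact hxi i
  have e : (LinearMap.ker A.mulVecLin) ≃ₗ[ℝ] (LinearMap.ker B.mulVecLin) :=
    LinearEquiv.ofBijective φ ⟨hinj, hsurj⟩
  exact e.finrank_eq
end

section
/- Let A be a real symmetric N×N matrix (N ≥ 3) and let u ≠ v be two of its indices such that A_{v w} = 0 for every index w ≠ u and A_{v u} ≠ 0. Then every vector z in the kernel of A satisfies z_u = 0 and z_v = −(1/A_{v u}) · Σ_{w ∉ {u,v}} A_{u w} z_w, and the restriction map sending z ∈ ker A to its restriction to the indices other than u and v is a linear isomorphism from ker A onto ker A₋₍ᵤ,ᵥ₎. -/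
open Matrix

lemma dangling_sum_split {ι : Type*} [Fintype ι] [DecidableEq ι] (u v : ι) (huv : u ≠ v)
    (f : ι → ℝ) :
    ∑ w, f w = f u + f v + ∑ w : {w : ι // w ≠ u ∧ w ≠ v}, f w := by
  classical
  have h1 : ∑ w ∈ (({u, v} : Finset ι)ᶜ), f w
      = ∑ w : {w : ι // w ≠ u ∧ w ≠ v}, f w :=
    Finset.sum_subtype _ (by intro x; simp [not_or]) f
  have h2 := Finset.sum_add_sum_compl ({u, v} : Finset ι) f
  rw [Finset.sum_pair huv, h1] at h2
  linarith [h2]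

/-- Extension of a vector on the complement of `{u,v}` to a full vector. -/
noncomputable def danglingExt (N : ℕ) (A : Matrix (Fin N) (Fin N) ℝ) (u v : Fin N)
    (y : {w : Fin N // w ≠ u ∧ w ≠ v} → ℝ) : Fin N → ℝ :=
  fun w => if h1 : w = u then 0 else if h2 : w = v then
    -(1 / A v u) * ∑ i : {w : Fin N // w ≠ u ∧ w ≠ v}, A u (i : Fin N) * y i
  else y ⟨w, h1, h2⟩

noncomputable def danglingExtL (N : ℕ) (A : Matrix (Fin N) (Fin N) ℝ) (u v : Fin N) :
    ({w : Fin N // w ≠ u ∧ w ≠ v} → ℝ) →ₗ[ℝ] (Fin N → ℝ) where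
  toFun := danglingExt N A u v
  map_add' y y' := by
    funext w
    simp only [danglingExt, Pi.add_apply]
    split_ifs with h1 h2
    · norm_num
    · rw [show (∑ i : {w : Fin N // w ≠ u ∧ w ≠ v}, A u (i : Fin N) * (y i + y' i))
          = (∑ i : {w : Fin N // w ≠ u ∧ w ≠ v}, A u (i : Fin N) * y i)
            + ∑ i : {w : Fin N // w ≠ u ∧ w ≠ v}, A u (i : Fin N) * y' i by
        rw [← Finset.sum_add_distrib]; exact Finset.sum_congr rfl (fun x _ => by ring)]
      ring
    · rfl
  map_smul' c y := by
    funext w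
    simp only [danglingExt, Pi.smul_apply, RingHom.id_apply, smul_eq_mul]
    split_ifs with h1 h2
    · norm_num
    · rw [show (∑ i : {w : Fin N // w ≠ u ∧ w ≠ v}, A u (i : Fin N) * (c * y i))
          = c * ∑ i : {w : Fin N // w ≠ u ∧ w ≠ v}, A u (i : Fin N) * y i by
        rw [Finset.mul_sum]; exact Finset.sum_congr rfl (fun x _ => by ring)]
      ring
    · rfl

/-- For a real symmetric matrix with a dangling vertex `v` whose unique neighbour
is `u`: every kernel vector `z` satisfies `z u = 0` and
`z v = -(1 / A v u) * ∑_{w ∉ {u,v}} A u w * z w`, and restriction of kernel vectors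
to the indices other than `u, v` is a linear isomorphism onto the kernel of the
principal submatrix deleting `u` and `v`. -/
theorem ker_restriction_equiv_of_dangling_vertex (N : ℕ) (hN : 3 ≤ N)
    (A : Matrix (Fin N) (Fin N) ℝ) (hsymm : A.IsSymm)
    (u v : Fin N) (huv : u ≠ v)
    (hdang : ∀ w : Fin N, w ≠ u → A v w = 0) (hvu : A v u ≠ 0) :
    (∀ z : Fin N → ℝ, A.mulVec z = 0 →
      z u = 0 ∧
      z v = -(1 / A v u) * ∑ w : {w : Fin N // w ≠ u ∧ w ≠ v}, A u (w : Fin N) * z (w : Fin N)) ∧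
    ∃ e : LinearMap.ker A.mulVecLin ≃ₗ[ℝ]
        LinearMap.ker (A.submatrix
          (fun i : {w : Fin N // w ≠ u ∧ w ≠ v} => (i : Fin N))
          (fun j : {w : Fin N // w ≠ u ∧ w ≠ v} => (j : Fin N))).mulVecLin,
      ∀ (z : LinearMap.ker A.mulVecLin) (i : {w : Fin N // w ≠ u ∧ w ≠ v}),
        (e z : {w : Fin N // w ≠ u ∧ w ≠ v} → ℝ) i = (z : Fin N → ℝ) (i : Fin N) := by
  classical
  set S := {w : Fin N // w ≠ u ∧ w ≠ v}
  set B := (A.submatrix (fun i : S => (i : Fin N)) (fun j : S => (j : Fin N)))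
  have hsym : ∀ i j, A i j = A j i := fun i j => by
    conv_lhs => rw [← hsymm, Matrix.transpose_apply]
  -- key facts for kernel vectors
  have key : ∀ z : Fin N → ℝ, A.mulVec z = 0 →
      z u = 0 ∧ z v = -(1 / A v u) * ∑ w : S, A u (w : Fin N) * z (w : Fin N) := by
    intro z hz
    have hrow : ∀ i, ∑ w, A i w * z w = 0 := by
      intro i
      have := congrFun hz i
      simpa [Matrix.mulVec, dotProduct] using this
    have hzu : z u = 0 := by
      have hv := hrow v
      have : ∑ w, A v w * z w = A v u * z u :=
        Finset.sum_eq_single u (fun b _ hb => by rw [hdang b hb]; ring) (by simp)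
      rw [this] at hv
      rcases mul_eq_zero.mp hv with h | h
      · exact absurd h hvu
      · exact h
    refine ⟨hzu, ?_⟩
    have hu := hrow u
    rw [dangling_sum_split u v huv] at hu
    rw [hzu, hsym u v] at hu
    field_simp
    linarith [hu]
  refine ⟨key, ?_⟩
  -- restriction map lands in ker B
  have hmemf : ∀ z : LinearMap.ker A.mulVecLin,
      B.mulVec (fun i : S => (z : Fin N → ℝ) (i : Fin N)) = 0 := by
    intro z
    have hz0 : A.mulVec (z : Fin N → ℝ) = 0 := z.2
    obtain ⟨hzu, hzv⟩ := key z hz0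
    funext i
    have hrow : ∑ w, A (i : Fin N) w * (z : Fin N → ℝ) w = 0 := by
      have := congrFun hz0 (i : Fin N)
      simpa [Matrix.mulVec, dotProduct] using this
    rw [dangling_sum_split u v huv] at hrow
    have hAiv : A (i : Fin N) v = 0 := by rw [hsym]; exact hdang _ i.2.1
    simp only [Matrix.mulVec, dotProduct, Matrix.submatrix_apply, B, Pi.zero_apply]
    rw [hzu, hAiv] at hrow
    simpa using hrow
  -- extension map lands in ker A
  have hmemg : ∀ y : LinearMap.ker B.mulVecLin,
      A.mulVec (danglingExt N A u v (y : S → ℝ)) = 0 := by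
    intro y
    have hy0 : B.mulVec (y : S → ℝ) = 0 := y.2
    have hrowB : ∀ i : S, ∑ w : S, A (i : Fin N) (w : Fin N) * (y : S → ℝ) w = 0 := by
      intro i
      have := congrFun hy0 i
      simpa [Matrix.mulVec, dotProduct, B] using this
    funext i
    have hvals : ∀ w : S, danglingExt N A u v (y : S → ℝ) (w : Fin N) = (y : S → ℝ) w := by
      intro w
      simp [danglingExt, w.2.1, w.2.2]
    have hvalu : danglingExt N A u v (y : S → ℝ) u = 0 := by simp [danglingExt]
    have hvalv : danglingExt N A u v (y : S → ℝ) v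
        = -(1 / A v u) * ∑ i : S, A u (i : Fin N) * (y : S → ℝ) i := by
      simp [danglingExt, huv.symm]
      left; convert rfl
    show ∑ w, A i w * danglingExt N A u v (y : S → ℝ) w = 0
    rw [dangling_sum_split u v huv, hvalu, Finset.sum_congr rfl
      (fun w _ => by rw [hvals w])]
    rw [hvalv]
    by_cases hiu : i = u
    · rw [hiu, hsym u v]
      field_simp
      ring
    · have hAiv : A i v = 0 := by rw [hsym]; exact hdang _ hiu
      by_cases hiv : i = v
      · have hsum0 : ∑ x : S, A v (x : Fin N) * (y : S → ℝ) x = 0 :=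
          Finset.sum_eq_zero (fun w _ => by rw [hdang _ w.2.1, zero_mul])
        rw [hiv, hdang v (Ne.symm huv), hsum0]
        ring
      · rw [hAiv, hrowB ⟨i, hiu, hiv⟩]
        ring
  -- the linear maps
  let f : LinearMap.ker A.mulVecLin →ₗ[ℝ] LinearMap.ker B.mulVecLin :=
    LinearMap.codRestrict _
      ((LinearMap.funLeft ℝ ℝ (fun i : S => (i : Fin N))).comp
        (LinearMap.ker A.mulVecLin).subtype)
      (fun z => by exact hmemf z)
  let g : LinearMap.ker B.mulVecLin →ₗ[ℝ] LinearMap.ker A.mulVecLin :=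
    LinearMap.codRestrict _
      ((danglingExtL N A u v).comp (LinearMap.ker B.mulVecLin).subtype)
      (fun y => by exact hmemg y)
  have hfg : f.comp g = LinearMap.id := by
    ext y i
    simp [f, g, LinearMap.codRestrict, danglingExtL, danglingExt, i.2.1, i.2.2]
  have hgf : g.comp f = LinearMap.id := by
    ext z
    have hz0 : A.mulVec (z : Fin N → ℝ) = 0 := z.2
    obtain ⟨hzu, hzv⟩ := key z hz0
    have : danglingExt N A u v (fun i : S => (z : Fin N → ℝ) (i : Fin N))
        = (z : Fin N → ℝ) := by
      funext w
      by_cases h1 : w = u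
      · subst h1; simpa [danglingExt] using hzu.symm
      · by_cases h2 : w = v
        · subst h2
          simp only [danglingExt, dif_neg h1, dif_pos rfl]
          exact hzv.symm
        · simp [danglingExt, h1, h2]
    simp only [LinearMap.comp_apply, LinearMap.id_apply, g, f, LinearMap.codRestrict]
    exact congrFun this _
  refine ⟨LinearEquiv.ofLinear f g hfg hgf, fun z i => rfl⟩
end

section
/- Let A be a real symmetric N×N matrix (N ≥ 4) and let p, u, v be three distinct indices such that A_{v w} = 0 for every index w ≠ u and A_{v u} ≠ 0 (so v is a dangling vertex with unique neighbour u, and p ∉ {u,v}). Then the principal submatrix A₋ₚ (deleting row and column p) is invertible if and only if the principal submatrix A₋₍ₚ,ᵤ,ᵥ₎ (deleting rows and columns p, u, v) is invertible. -/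
open Matrix Finset

lemma sub_sum_key {α : Type*} [Fintype α] [DecidableEq α] (u v : α) (huv : u ≠ v)
    (f : α → ℝ) :
    ∑ j : {w : α // w ≠ u ∧ w ≠ v}, f j = (∑ j, f j) - f u - f v := by
  have h1 : ∑ j : {w : α // w ≠ u ∧ w ≠ v}, f (j : α)
      = ∑ j ∈ Finset.univ \ {u, v}, f j := by
    exact (Finset.sum_subtype (s := Finset.univ \ {u, v})
      (p := fun w => w ≠ u ∧ w ≠ v) (by simp [not_or]) f).symm
  rw [h1, Finset.sum_sdiff_eq_sub (Finset.subset_univ _), Finset.sum_pair huv]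
  ring

lemma dangling_det_eq_zero_iff {α : Type*} [Fintype α] [DecidableEq α]
    (M : Matrix α α ℝ) (u v : α) (huv : u ≠ v)
    (hrow : ∀ w, w ≠ u → M v w = 0) (hcol : ∀ w, w ≠ u → M w v = 0)
    (hMvu : M v u ≠ 0) (hMuv : M u v ≠ 0) :
    M.det = 0 ↔
      (M.submatrix (fun i : {w : α // w ≠ u ∧ w ≠ v} => (i : α))
        (fun j : {w : α // w ≠ u ∧ w ≠ v} => (j : α))).det = 0 := by
  rw [← Matrix.exists_mulVec_eq_zero_iff, ← Matrix.exists_mulVec_eq_zero_iff]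
  constructor
  · rintro ⟨x, hx0, hx⟩
    have hxu : x u = 0 := by
      have hv := congrFun hx v
      simp only [Matrix.mulVec, dotProduct, Pi.zero_apply] at hv
      rw [Finset.sum_eq_single u (fun b _ hb => by rw [hrow b hb, zero_mul])
        (by simp)] at hv
      exact (mul_eq_zero.mp hv).resolve_left hMvu
    refine ⟨fun j => x j, ?_, ?_⟩
    · intro hy
      apply hx0
      have hxv : x v = 0 := by
        have hu := congrFun hx u
        simp only [Matrix.mulVec, dotProduct, Pi.zero_apply] at hu
        rw [Finset.sum_eq_single v ?_ (by simp)] at hu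
        · exact (mul_eq_zero.mp hu).resolve_left hMuv
        · intro b _ hb
          by_cases hbu : b = u
          · rw [hbu, hxu, mul_zero]
          · have : x b = 0 := congrFun hy ⟨b, hbu, hb⟩
            rw [this, mul_zero]
      funext w
      by_cases hwu : w = u
      · simpa [hwu] using hxu
      by_cases hwv : w = v
      · simpa [hwv] using hxv
      exact congrFun hy ⟨w, hwu, hwv⟩
    · funext i
      simp only [Matrix.mulVec, dotProduct, Matrix.submatrix_apply,
        Pi.zero_apply]
      rw [sub_sum_key u v huv (fun w => M i.1 w * x w)]
      have hi := congrFun hx i.1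
      simp only [Matrix.mulVec, dotProduct, Pi.zero_apply] at hi
      rw [hi, hxu, hcol i.1 i.2.1]
      ring
  · rintro ⟨y, hy0, hy⟩
    classical
    set Y : α → ℝ := fun w => if h : w ≠ u ∧ w ≠ v then y ⟨w, h⟩ else 0 with hYdef
    have hYu : Y u = 0 := by simp [hYdef]
    have hYv : Y v = 0 := by simp [hYdef]
    set t : ℝ := -(∑ w, M u w * Y w) / M u v with htdef
    refine ⟨fun w => if w = v then t else Y w, ?_, ?_⟩
    · intro hx
      apply hy0
      funext j
      have h1 := congrFun hx j.1
      simp only [Pi.zero_apply] at h1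
      rw [if_neg j.2.2] at h1
      have hYj : Y j.1 = y j := by
        rw [hYdef]
        simp only [dif_pos (show j.1 ≠ u ∧ j.1 ≠ v from j.2)]
      rw [hYj] at h1
      exact h1
    · funext i
      simp only [Matrix.mulVec, dotProduct, Pi.zero_apply]
      have hsplit : ∑ j, M i j * (if j = v then t else Y j)
          = (∑ j, M i j * Y j) + M i v * t := by
        rw [← Finset.sum_erase_add _ _ (Finset.mem_univ v),
          ← Finset.sum_erase_add _ (fun j => M i j * Y j) (Finset.mem_univ v)]
        simp only [if_pos rfl, hYv, mul_zero, add_zero]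
        congr 1
        refine Finset.sum_congr rfl fun b hb => ?_
        rw [if_neg (Finset.ne_of_mem_erase hb)]
      rw [hsplit]
      by_cases hiv : i = v
      · rw [hiv, Finset.sum_eq_single u (fun b _ hb => by rw [hrow b hb, zero_mul])
          (by simp), hYu, hrow v (Ne.symm huv)]
        ring
      by_cases hiu : i = u
      · rw [hiu, htdef, mul_div_assoc', mul_comm, mul_div_assoc, div_self hMuv]
        ring
      · rw [hcol i hiu]
        have hyi := congrFun hy (⟨i, hiu, hiv⟩ : {w : α // w ≠ u ∧ w ≠ v})
        simp only [Matrix.mulVec, dotProduct, Matrix.submatrix_apply,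
          Pi.zero_apply] at hyi
        have hyY : ∀ j : {w : α // w ≠ u ∧ w ≠ v}, y j = Y j.1 := by
          intro j
          rw [hYdef]
          simp only [dif_pos (show j.1 ≠ u ∧ j.1 ≠ v from j.2)]
        have h2 : ∑ j : {w : α // w ≠ u ∧ w ≠ v}, M i j.1 * Y j.1 = 0 := by
          rw [← hyi]
          exact Finset.sum_congr rfl fun j _ => by rw [hyY j]
        rw [sub_sum_key u v huv (fun w => M i w * Y w)] at h2
        simp only [hYu, hYv, mul_zero, sub_zero] at h2
        rw [h2]
        ring

/-- For a real symmetric matrix with a dangling vertex `v` whose unique neighbour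
is `u`, and a third index `p`: the principal submatrix deleting `p` is invertible
iff the principal submatrix deleting `p, u, v` is invertible. -/
theorem principal_submatrix_invertible_iff_of_dangling_vertex (N : ℕ) (hN : 4 ≤ N)
    (A : Matrix (Fin N) (Fin N) ℝ) (hsymm : A.IsSymm)
    (p u v : Fin N) (hpu : p ≠ u) (hpv : p ≠ v) (huv : u ≠ v)
    (hdang : ∀ w : Fin N, w ≠ u → A v w = 0) (hvu : A v u ≠ 0) :
    (A.submatrix
        (fun i : {w : Fin N // w ≠ p} => (i : Fin N))
        (fun j : {w : Fin N // w ≠ p} => (j : Fin N))).det ≠ 0 ↔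
    (A.submatrix
        (fun i : {w : Fin N // w ≠ p ∧ w ≠ u ∧ w ≠ v} => (i : Fin N))
        (fun j : {w : Fin N // w ≠ p ∧ w ≠ u ∧ w ≠ v} => (j : Fin N))).det ≠ 0 := by
  classical
  set M : Matrix {w : Fin N // w ≠ p} {w : Fin N // w ≠ p} ℝ :=
    A.submatrix (fun i => (i : Fin N)) (fun j => (j : Fin N)) with hM
  set u' : {w : Fin N // w ≠ p} := ⟨u, Ne.symm hpu⟩
  set v' : {w : Fin N // w ≠ p} := ⟨v, Ne.symm hpv⟩
  have huv' : u' ≠ v' := fun h => huv (congrArg Subtype.val h)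
  have hrow : ∀ w, w ≠ u' → M v' w = 0 := by
    intro w hw
    exact hdang w.1 (fun h => hw (Subtype.ext h))
  have hcol : ∀ w, w ≠ u' → M w v' = 0 := by
    intro w hw
    have := hsymm.apply w.1 v
    simp only [hM, Matrix.submatrix_apply]
    rw [← hsymm.apply]
    exact hdang w.1 (fun h => hw (Subtype.ext h))
  have hMvu : M v' u' ≠ 0 := hvu
  have hMuv : M u' v' ≠ 0 := by
    show A u v ≠ 0
    rw [hsymm.apply]
    exact hvu
  have key := dangling_det_eq_zero_iff M u' v' huv' hrow hcol hMvu hMuv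
  -- reindex the double subtype to the triple-condition subtype
  have hdet : (M.submatrix
        (fun i : {w : {w : Fin N // w ≠ p} // w ≠ u' ∧ w ≠ v'} => (i : {w : Fin N // w ≠ p}))
        (fun j : {w : {w : Fin N // w ≠ p} // w ≠ u' ∧ w ≠ v'} => (j : {w : Fin N // w ≠ p}))).det
      = (A.submatrix
        (fun i : {w : Fin N // w ≠ p ∧ w ≠ u ∧ w ≠ v} => (i : Fin N))
        (fun j : {w : Fin N // w ≠ p ∧ w ≠ u ∧ w ≠ v} => (j : Fin N))).det := by
    let e : {w : Fin N // w ≠ p ∧ w ≠ u ∧ w ≠ v} ≃ {w : {w : Fin N // w ≠ p} // w ≠ u' ∧ w ≠ v'} :=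
      { toFun := fun j => ⟨⟨j.1, j.2.1⟩,
          fun h => j.2.2.1 (congrArg Subtype.val h),
          fun h => j.2.2.2 (congrArg Subtype.val h)⟩
        invFun := fun j => ⟨j.1.1, j.1.2,
          fun h => j.2.1 (Subtype.ext h), fun h => j.2.2 (Subtype.ext h)⟩
        left_inv := fun j => rfl
        right_inv := fun j => rfl }
    rw [← Matrix.det_submatrix_equiv_self e]
    rfl
  rw [not_iff_not, key, hdet]
end

section
/- Let n ≥ 1 and let S ⊆ Fin n × Fin n be a set of index pairs containing every diagonal pair (i,i). Let (X_s)_{s ∈ S} be independent real-valued random variables, each of whose distribution is atomless (no single value has positive probability). Define the random n×n real matrix M by M_{ij} = X_{(i,j)} if (i,j) ∈ S and M_{ij} = 0 otherwise. Then almost surely det M ≠ 0. -/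
open Matrix MeasureTheory ProbabilityTheory

open MvPolynomial in
/-- If a multivariate polynomial over `ℝ` is nonzero, then its zero set is null for
any product of atomless probability measures. -/
lemma pi_eval_zero_set : ∀ (k : ℕ) (ν : Fin k → Measure ℝ),
    (∀ i, IsProbabilityMeasure (ν i)) → (∀ i, NoAtoms (ν i)) →
    ∀ p : MvPolynomial (Fin k) ℝ, p ≠ 0 →
    Measure.pi ν {x | eval x p = 0} = 0 := by
  intro k
  induction k with
  | zero =>
    intro ν _ _ p hp
    have : {x : Fin 0 → ℝ | eval x p = 0} = ∅ := by
      ext x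
      simp only [Set.mem_setOf_eq, Set.mem_empty_iff_false, iff_false]
      rw [eq_C_of_isEmpty p, eval_C]
      intro h
      refine hp ?_
      rw [eq_C_of_isEmpty p, h]
      exact map_zero _
    rw [this]
    exact measure_empty
  | succ k ih =>
    intro ν hprob hatom p hp
    haveI := hprob
    haveI := hatom
    set q : Polynomial (MvPolynomial (Fin k) ℝ) := finSuccEquiv ℝ k p with hq
    have hq0 : q ≠ 0 := by
      intro h
      exact hp ((map_eq_zero_iff _ (finSuccEquiv ℝ k).injective).mp h)
    have hlc : q.leadingCoeff ≠ 0 := Polynomial.leadingCoeff_ne_zero.mpr hq0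
    set t : Set (ℝ × (Fin k → ℝ)) :=
      {yx | Polynomial.eval yx.1 (Polynomial.map (eval yx.2) q) = 0} with ht
    have hconsCont : Continuous fun yx : ℝ × (Fin k → ℝ) => (Fin.cons yx.1 yx.2 : Fin (k+1) → ℝ) := by
      refine continuous_pi fun i => ?_
      refine Fin.cases ?_ (fun j => ?_) i
      · simpa using continuous_fst
      · simpa using (continuous_apply j).comp' continuous_snd
    have htfun : ∀ yx : ℝ × (Fin k → ℝ),
        Polynomial.eval yx.1 (Polynomial.map (eval yx.2) q)
          = eval (Fin.cons yx.1 yx.2 : Fin (k+1) → ℝ) p := by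
      intro yx
      rw [eval_eq_eval_mv_eval', ← hq]
    have htm : MeasurableSet t := by
      have hcont : Continuous fun yx : ℝ × (Fin k → ℝ) =>
          Polynomial.eval yx.1 (Polynomial.map (eval yx.2) q) := by
        have : (fun yx : ℝ × (Fin k → ℝ) =>
            Polynomial.eval yx.1 (Polynomial.map (eval yx.2) q))
            = (fun x : Fin (k+1) → ℝ => eval x p) ∘ fun yx => Fin.cons yx.1 yx.2 := by
          funext yx
          exact htfun yx
        rw [this]
        exact Continuous.comp (MvPolynomial.continuous_eval p) hconsCont
      exact hcont.measurable (measurableSet_singleton 0)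
    have hmp := measurePreserving_piFinSuccAbove ν 0
    have htZ : (MeasurableEquiv.piFinSuccAbove (fun _ : Fin (k+1) => ℝ) 0) ⁻¹' t
        = {x : Fin (k+1) → ℝ | eval x p = 0} := by
      ext f
      simp only [Set.mem_preimage, Set.mem_setOf_eq, ht]
      have e0 : (MeasurableEquiv.piFinSuccAbove (fun _ : Fin (k+1) => ℝ) 0) f
          = (f 0, Fin.removeNth 0 f) := rfl
      rw [e0]
      rw [htfun (f 0, Fin.removeNth 0 f)]
      rw [show (Fin.cons (f 0) (Fin.removeNth 0 f) : Fin (k+1) → ℝ) = f by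
        rw [Fin.removeNth_zero, Fin.cons_self_tail]]
    have key : Measure.pi ν {x : Fin (k+1) → ℝ | eval x p = 0}
        = ((ν 0).prod (Measure.pi fun j => ν (Fin.succAbove 0 j))) t := by
      rw [← htZ]
      exact hmp.measure_preimage_equiv t
    rw [key, Measure.prod_apply_symm htm]
    have hN := ih (fun j => ν (Fin.succAbove 0 j)) (fun j => hprob _) (fun j => hatom _)
      q.leadingCoeff hlc
    have hae : ∀ᵐ x ∂(Measure.pi fun j => ν (Fin.succAbove 0 j)),
        (ν 0) ((fun y => (y, x)) ⁻¹' t) = 0 := by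
      have := (measure_eq_zero_iff_ae_notMem
        (μ := Measure.pi fun j => ν (Fin.succAbove 0 j))).mp hN
      filter_upwards [this] with x hx
      have hr : Polynomial.map (eval x) q ≠ 0 := by
        intro h
        refine hx ?_
        show eval x q.leadingCoeff = 0
        have hc := congrArg (fun r => Polynomial.coeff r q.natDegree) h
        simpa [Polynomial.coeff_map, Polynomial.coeff_natDegree] using hc
      have hfin : {y : ℝ | Polynomial.IsRoot (Polynomial.map (eval x) q) y}.Finite :=
        Polynomial.finite_setOf_isRoot hr
      have hset : ((fun y => (y, x)) ⁻¹' t)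
          = {y : ℝ | Polynomial.IsRoot (Polynomial.map (eval x) q) y} := rfl
      rw [hset]
      exact (haveI : NullSingletonClass (ν 0) := hatom 0; hfin.measure_zero _)
    rw [lintegral_congr_ae hae, lintegral_zero]

/-- A random matrix whose entries at positions in `S` (containing the diagonal)
are independent atomless random variables, and zero elsewhere, almost surely has
nonzero determinant. -/
theorem det_random_matrix_ne_zero_ae (n : ℕ) (hn : 1 ≤ n)
    (S : Finset (Fin n × Fin n)) (hS : ∀ i : Fin n, (i, i) ∈ S)
    {Ω : Type*} [MeasurableSpace Ω] (μ : Measure Ω) [IsProbabilityMeasure μ]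
    (X : {s // s ∈ S} → Ω → ℝ) (hmeas : ∀ s, Measurable (X s))
    (hindep : iIndepFun X μ)
    (hatomless : ∀ (s : {s // s ∈ S}) (c : ℝ), μ (X s ⁻¹' {c}) = 0) :
    ∀ᵐ ω ∂μ,
      (Matrix.of fun i j : Fin n =>
          if h : (i, j) ∈ S then X ⟨(i, j), h⟩ ω else 0).det ≠ 0 := by
  classical
  set A : Matrix (Fin n) (Fin n) (MvPolynomial {s // s ∈ S} ℝ) :=
    Matrix.of (fun i j => if h : (i, j) ∈ S then MvPolynomial.X ⟨(i, j), h⟩ else 0) with hA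
  set p : MvPolynomial {s // s ∈ S} ℝ := A.det with hpdef
  -- evaluation of the determinant polynomial
  have hev : ∀ w : {s // s ∈ S} → ℝ, MvPolynomial.eval w p
      = (Matrix.of fun i j : Fin n => if h : (i, j) ∈ S then w ⟨(i, j), h⟩ else 0).det := by
    intro w
    rw [hpdef, RingHom.map_det]
    congr 1
    ext i j
    simp only [RingHom.mapMatrix_apply, Matrix.map_apply, Matrix.of_apply, hA]
    split_ifs with h
    · exact MvPolynomial.eval_X _
    · exact map_zero _
  -- the polynomial is nonzero (it evaluates to 1 on the "identity" assignment)
  have hp0 : p ≠ 0 := by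
    intro h
    have h1 : MvPolynomial.eval (fun s : {s // s ∈ S} => if s.1.1 = s.1.2 then (1 : ℝ) else 0) p = 1 := by
      rw [hev]
      have : (Matrix.of fun i j : Fin n =>
          if h : (i, j) ∈ S then (if ((⟨(i, j), h⟩ : {s // s ∈ S})).1.1 = ((⟨(i, j), h⟩ : {s // s ∈ S})).1.2
            then (1 : ℝ) else 0) else 0) = (1 : Matrix (Fin n) (Fin n) ℝ) := by
        ext i j
        by_cases hij : i = j
        · subst hij
          simp [hS i, Matrix.one_apply]
        · simp only [Matrix.of_apply, Matrix.one_apply, hij, if_false]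
          split_ifs <;> rfl
      rw [this, Matrix.det_one]
    rw [h, map_zero] at h1
    exact zero_ne_one h1
  -- transfer everything to `Fin k`
  haveI : Fintype {s // s ∈ S} := FinsetCoe.fintype S
  set k := Fintype.card {s // s ∈ S} with hk
  set e : {s // s ∈ S} ≃ Fin k := Fintype.equivFin {s // s ∈ S} with he
  set ν : Fin k → Measure ℝ := fun j => Measure.map (X (e.symm j)) μ with hν
  have hprob : ∀ j, IsProbabilityMeasure (ν j) :=
    fun j => Measure.isProbabilityMeasure_map (hmeas _).aemeasurable
  have hatom : ∀ j, NoAtoms (ν j) := fun j => ⟨fun c => by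
    rw [hν]
    rw [Measure.map_apply (hmeas _) (measurableSet_singleton c)]
    exact hatomless _ c⟩
  set pF : MvPolynomial (Fin k) ℝ := MvPolynomial.rename e p with hpF
  have hpF0 : pF ≠ 0 := by
    intro h
    exact hp0 (MvPolynomial.rename_injective (e : {s // s ∈ S} → Fin k) e.injective
      (by rw [← hpF, h, map_zero]))
  set φ : Ω → (Fin k → ℝ) := fun ω j => X (e.symm j) ω with hφdef
  have hφ : Measurable φ := measurable_pi_lambda _ fun j => hmeas _
  -- the joint law is the product measure
  have hmap : Measure.map φ μ = Measure.pi ν := by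
    refine (Measure.pi_eq fun s hs => ?_).symm
    rw [Measure.map_apply hφ (MeasurableSet.univ_pi hs)]
    have hpre : φ ⁻¹' Set.pi Set.univ s = ⋂ i : {s // s ∈ S}, X i ⁻¹' s (e i) := by
      ext ω
      simp only [Set.mem_preimage, Set.mem_univ_pi, Set.mem_iInter, hφdef]
      constructor
      · intro h i
        have := h (e i)
        simpa using this
      · intro h j
        have := h (e.symm j)
        simpa using this
    rw [hpre, show (⋂ i : {s // s ∈ S}, X i ⁻¹' s (e i)) = ⋂ i ∈ Finset.univ, X i ⁻¹' s (e i) by simp]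
    rw [hindep.measure_inter_preimage_eq_mul Finset.univ
      (sets := fun i => s (e i)) (fun i _ => hs (e i))]
    refine Fintype.prod_equiv e _ _ fun i => ?_
    rw [hν]
    rw [Measure.map_apply (hmeas _) (hs _)]
    simp
  -- measurability of the zero set
  have hZF : MeasurableSet {x : Fin k → ℝ | MvPolynomial.eval x pF = 0} :=
    (MvPolynomial.continuous_eval pF).measurable (measurableSet_singleton (0 : ℝ))
  -- identify the bad event with the preimage of the zero set
  have hset : {ω | (Matrix.of fun i j : Fin n =>
      if h : (i, j) ∈ S then X ⟨(i, j), h⟩ ω else 0).det = 0}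
      = φ ⁻¹' {x : Fin k → ℝ | MvPolynomial.eval x pF = 0} := by
    ext ω
    simp only [Set.mem_setOf_eq, Set.mem_preimage]
    rw [hpF, MvPolynomial.eval_rename]
    have hcomp : (φ ω) ∘ (e : {s // s ∈ S} → Fin k) = fun i : {s // s ∈ S} => X i ω := by
      funext i
      simp [hφdef]
    rw [hcomp, hev (fun i : {s // s ∈ S} => X i ω)]
  rw [ae_iff]
  simp only [ne_eq, not_not]
  rw [hset, ← Measure.map_apply hφ hZF, hmap]
  exact pi_eval_zero_set k ν hprob hatom pF hpF0
end

section
/- Let n ≥ 1 and let S ⊆ Fin n × Fin n be a set of index pairs containing every diagonal pair (i,i). Let (X_s)_{s ∈ S} be independent real-valued random variables, each with an atomless distribution, and define the random n×n real matrix B by B_{ij} = X_{(i,j)} if (i,j) ∈ S and B_{ij} = 0 otherwise. Let C : Ω → (n×n real matrices) be any measurable map on the same probability space (possibly depending on the X_s). Then almost surely the 2n×2n block matrix [[0, B], [Bᵀ, C]] has nonzero determinant. -/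
open Matrix MeasureTheory ProbabilityTheory

lemma det_decomp (m : ℕ) (E : Matrix (Fin (m+1)) (Fin (m+1)) ℝ) (d : Fin (m+1) → ℝ) :
    (Matrix.of fun i j => if i = j then d i else E i j).det =
      d 0 * (Matrix.of fun i j : Fin m =>
          if i = j then d (Fin.succ i) else E (Fin.succ i) (Fin.succ j)).det
      + (Matrix.updateRow
          (Matrix.of fun i j => if i = j then (Fin.cons 0 fun k => d (Fin.succ k) : Fin (m+1) → ℝ) i
            else E i j)
          0 (fun j => if j = 0 then 0 else E 0 j)).det := by
  set M : Matrix (Fin (m+1)) (Fin (m+1)) ℝ := Matrix.of fun i j => if i = j then d i else E i j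
  set v : Fin (m+1) → ℝ := fun j => if j = 0 then 0 else E 0 j
  set u : Fin (m+1) → ℝ := Pi.single (0 : Fin (m+1)) (1:ℝ)
  have h1 : M = M.updateRow 0 (d 0 • u + v) := by
    ext i j
    by_cases hi : i = 0
    · subst hi
      by_cases hj : j = 0
      · subst hj; simp [M, v, u, Pi.single]
      · simp [M, v, u, Pi.single_apply, Ne.symm hj, hj]
    · simp [Matrix.updateRow_apply, hi]
  have h2 : M.det = d 0 * (M.updateRow 0 u).det + (M.updateRow 0 v).det := by
    rw [h1, Matrix.det_updateRow_add, Matrix.det_updateRow_smul]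
    simp [← h1]
  rw [h2]
  congr 1
  · congr 1
    rw [Matrix.det_succ_row_zero]
    rw [Finset.sum_eq_single 0]
    · simp only [Matrix.updateRow_self, u, Pi.single_eq_same, Fin.val_zero, pow_zero, one_mul,
        Fin.succAbove_zero]
      congr 1
      ext i j
      simp [M, Matrix.submatrix_apply, Matrix.updateRow_apply, Fin.succ_ne_zero, Fin.succ_inj]
    · intro b _ hb
      simp [Matrix.updateRow_self, u, Pi.single_apply, hb]
    · simp
  · congr 1
    ext i j
    rcases Fin.eq_zero_or_eq_succ i with hi | ⟨k, rfl⟩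
    · subst hi; simp [Matrix.updateRow_apply]
    · simp [Matrix.updateRow_apply, Fin.succ_ne_zero, M]

lemma det_diag_add_ae_ne_zero : ∀ (m : ℕ) (ν : Fin m → Measure ℝ),
    (∀ i, IsProbabilityMeasure (ν i)) → (∀ i (c : ℝ), ν i {c} = 0) →
    ∀ (E : Matrix (Fin m) (Fin m) ℝ),
    Measure.pi ν {d | (Matrix.of fun i j => if i = j then d i else E i j).det = 0} = 0 := by
  intro m
  induction m with
  | zero =>
    intro ν _ _ E
    have : {d : Fin 0 → ℝ | (Matrix.of fun i j => if i = j then d i else E i j).det = 0} = ∅ := by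
      ext d; simp [Matrix.det_fin_zero]
    simp [this]
  | succ m IH =>
    intro ν hprob hatom E
    haveI : ∀ i, IsProbabilityMeasure (ν i) := hprob
    -- q and r
    set q : (Fin m → ℝ) → ℝ := fun y => (Matrix.of fun i j : Fin m =>
        if i = j then y i else E (Fin.succ i) (Fin.succ j)).det with hq
    set r : (Fin m → ℝ) → ℝ := fun y => (Matrix.updateRow
        (Matrix.of fun i j => if i = j then (Fin.cons 0 y : Fin (m+1) → ℝ) i else E i j)
        0 (fun j => if j = 0 then 0 else E 0 j)).det with hr
    have hqc : Continuous q := by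
      apply Continuous.matrix_det
      apply continuous_pi; intro i; apply continuous_pi; intro j
      by_cases h : i = j <;> simp [h, continuous_apply, continuous_const]
    have hrc : Continuous r := by
      apply Continuous.matrix_det
      refine Continuous.matrix_updateRow 0 ?_ continuous_const
      apply continuous_pi; intro i; apply continuous_pi; intro j
      by_cases h : i = j
      · subst h
        rcases Fin.eq_zero_or_eq_succ i with hi | ⟨k, rfl⟩
        · subst hi; simpa using continuous_const
        · simpa using continuous_apply k
      · simp only [Matrix.of_apply, h, if_false]; exact continuous_const
    -- the set as a preimage under piFinSuccAbove
    set e := MeasurableEquiv.piFinSuccAbove (fun _ : Fin (m+1) => ℝ) 0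
    set s : Set (ℝ × (Fin m → ℝ)) := {p | p.1 * q p.2 + r p.2 = 0}
    have hsm : MeasurableSet s := by
      have : Continuous fun p : ℝ × (Fin m → ℝ) => p.1 * q p.2 + r p.2 :=
        (continuous_fst.mul (hqc.comp continuous_snd)).add (hrc.comp continuous_snd)
      exact this.measurable (measurableSet_singleton 0)
    have hset : {d : Fin (m+1) → ℝ | (Matrix.of fun i j => if i = j then d i else E i j).det = 0}
        = e ⁻¹' s := by
      ext d
      have he : e d = (d 0, fun j => d (Fin.succ j)) := by
        simp [e, MeasurableEquiv.piFinSuccAbove, Fin.succAbove_zero, Fin.tail]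
        rfl
      simp only [Set.mem_setOf_eq, Set.mem_preimage, he, s]
      rw [det_decomp m E d]
    rw [hset]
    have hmp := measurePreserving_piFinSuccAbove ν 0
    rw [hmp.measure_preimage_equiv s]
    -- now product measure
    rw [Measure.prod_apply_symm hsm]
    have hIH : (Measure.pi fun j => ν ((0 : Fin (m+1)).succAbove j)) {y | q y = 0} = 0 := by
      have := IH (fun j => ν (Fin.succ j)) (fun j => hprob _) (fun j c => hatom _ c)
        (Matrix.of fun i j => E (Fin.succ i) (Fin.succ j))
      simpa [Fin.succAbove_zero, hq] using this
    have hae : ∀ᵐ y ∂(Measure.pi fun j => ν ((0 : Fin (m+1)).succAbove j)), q y ≠ 0 := by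
      rw [ae_iff]
      simpa using hIH
    have : ∀ᵐ y ∂(Measure.pi fun j => ν ((0 : Fin (m+1)).succAbove j)),
        (ν 0) ((fun x => (x, y)) ⁻¹' s) = 0 := by
      filter_upwards [hae] with y hy
      have : (fun x => (x, y)) ⁻¹' s = {-(r y) / q y} := by
        ext x
        simp only [Set.mem_preimage, s, Set.mem_setOf_eq, Set.mem_singleton_iff]
        rw [eq_div_iff hy]
        constructor <;> intro h <;> linarith
      rw [this]
      exact hatom 0 _
    rw [lintegral_congr_ae this]
    simp

/-- For a random matrix `B` with independent atomless entries (on a support set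
`S` containing the diagonal) and an arbitrary measurable random matrix `C`, the
block matrix `[[0, B], [Bᵀ, C]]` almost surely has nonzero determinant. -/
theorem det_fromBlocks_random_ne_zero_ae (n : ℕ) (hn : 1 ≤ n)
    (S : Finset (Fin n × Fin n)) (hS : ∀ i : Fin n, (i, i) ∈ S)
    {Ω : Type*} [MeasurableSpace Ω] (μ : Measure Ω) [IsProbabilityMeasure μ]
    (X : {s // s ∈ S} → Ω → ℝ) (hmeas : ∀ s, Measurable (X s))
    (hindep : iIndepFun X μ)
    (hatomless : ∀ (s : {s // s ∈ S}) (c : ℝ), μ (X s ⁻¹' {c}) = 0)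
    (B : Ω → Matrix (Fin n) (Fin n) ℝ)
    (hB : ∀ ω (i j : Fin n), B ω i j = if h : (i, j) ∈ S then X ⟨(i, j), h⟩ ω else 0)
    (C : Ω → Matrix (Fin n) (Fin n) ℝ) (hC : ∀ i j : Fin n, Measurable fun ω => C ω i j) :
    ∀ᵐ ω ∂μ,
      (Matrix.fromBlocks (0 : Matrix (Fin n) (Fin n) ℝ) (B ω) (B ω)ᵀ (C ω)).det ≠ 0 := by
  -- It suffices that `det (B ω) ≠ 0` a.s.
  suffices hdet : ∀ᵐ ω ∂μ, (B ω).det ≠ 0 by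
    filter_upwards [hdet] with ω hω
    set J : Matrix (Fin n ⊕ Fin n) (Fin n ⊕ Fin n) ℝ := Matrix.fromBlocks 0 1 1 0
    have hJ : J * J = 1 := by
      simp [J, Matrix.fromBlocks_multiply, ← Matrix.fromBlocks_one]
    have hJdet : J.det * J.det = 1 := by
      rw [← Matrix.det_mul, hJ, Matrix.det_one]
    have hfactor : Matrix.fromBlocks (0 : Matrix (Fin n) (Fin n) ℝ) (B ω) (B ω)ᵀ (C ω)
        = Matrix.fromBlocks (B ω) 0 (C ω) (B ω)ᵀ * J := by
      simp [J, Matrix.fromBlocks_multiply]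
    rw [hfactor, Matrix.det_mul, Matrix.det_fromBlocks_zero₁₂, Matrix.det_transpose]
    intro h
    rcases mul_eq_zero.mp h with h | h
    · rcases mul_eq_zero.mp h with h | h <;> exact hω h
    · rw [h, mul_zero] at hJdet; exact zero_ne_one hJdet
  -- Setup
  set Xd : Fin n → Ω → ℝ := fun i => X ⟨(i, i), hS i⟩ with hXd
  set D : Ω → Fin n → ℝ := fun ω i => Xd i ω with hD
  set W : Ω → {p : Fin n × Fin n // p ∈ S ∧ p.1 ≠ p.2} → ℝ :=
    fun ω t => X ⟨t.1, t.2.1⟩ ω with hW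
  have hDmeas : Measurable D := measurable_pi_lambda _ fun i => hmeas _
  have hWmeas : Measurable W := measurable_pi_lambda _ fun t => hmeas _
  -- the deterministic function
  set G : (Fin n → ℝ) × ({p : Fin n × Fin n // p ∈ S ∧ p.1 ≠ p.2} → ℝ) → ℝ :=
    fun p => (Matrix.of fun i j => if i = j then p.1 i else
      (if h : (i, j) ∈ S ∧ i ≠ j then p.2 ⟨(i, j), h⟩ else 0)).det with hG
  have hdetc : Continuous fun f : Fin n → Fin n → ℝ => (Matrix.of f).det :=
    Continuous.matrix_det continuous_id
  have hGmeas : Measurable G := by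
    refine hdetc.measurable.comp ?_
    refine measurable_pi_lambda _ fun i => measurable_pi_lambda _ fun j => ?_
    split_ifs with h h2
    · exact (measurable_pi_apply i).comp measurable_fst
    · exact (measurable_pi_apply _).comp measurable_snd
    · exact measurable_const
  have hBG : ∀ ω, (B ω).det = G (D ω, W ω) := by
    intro ω
    congr 1
    ext i j
    rw [hB]
    by_cases h : i = j
    · subst h
      simp only [Matrix.of_apply, if_pos rfl, dif_pos (hS i)]
      rfl
    · simp only [Matrix.of_apply, if_neg h]
      by_cases h2 : (i, j) ∈ S
      · rw [dif_pos h2, dif_pos ⟨h2, h⟩]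
      · rw [dif_neg h2, dif_neg (fun hc => h2 hc.1)]
  -- independence of D and W
  have hindepDW : IndepFun D W μ := by
    classical
    set A : Finset {s // s ∈ S} := Finset.univ.filter fun t => t.1.1 = t.1.2 with hA
    set Bf : Finset {s // s ∈ S} := Finset.univ.filter fun t => t.1.1 ≠ t.1.2 with hBf
    have hdisj : Disjoint A Bf := by
      simp only [Finset.disjoint_left, hA, hBf, Finset.mem_filter]
      rintro t ⟨-, h1⟩ ⟨-, h2⟩
      exact h2 h1
    have h := hindep.indepFun_finset A Bf hdisj hmeas
    have hφ : Measurable fun v : {x // x ∈ A} → ℝ => (fun i : Fin n =>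
        v ⟨⟨(i, i), hS i⟩, by simp [hA]⟩) :=
      measurable_pi_lambda _ fun i => measurable_pi_apply _
    have hψ : Measurable fun v : {x // x ∈ Bf} → ℝ =>
        (fun t : {p : Fin n × Fin n // p ∈ S ∧ p.1 ≠ p.2} =>
          v ⟨⟨t.1, t.2.1⟩, by simp [hBf, t.2.2]⟩) :=
      measurable_pi_lambda _ fun t => measurable_pi_apply _
    exact h.comp hφ hψ
  -- law of D is a product of atomless measures
  have hmapD : μ.map D = Measure.pi fun i => μ.map (Xd i) := by
    classical
    refine (Measure.pi_eq fun s hs => ?_).symm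
    rw [Measure.map_apply hDmeas (MeasurableSet.univ_pi hs)]
    have hpre : D ⁻¹' Set.pi Set.univ s = ⋂ i, Xd i ⁻¹' s i := by
      ext ω; simp [hD, Set.mem_pi]
    set emb : Fin n → {s // s ∈ S} := fun i => ⟨(i, i), hS i⟩ with hemb
    have hinj : Function.Injective emb := by
      intro a b hab
      simpa [hemb, Subtype.ext_iff, Prod.ext_iff] using hab
    have h := (iIndepFun_iff_measure_inter_preimage_eq_mul.mp hindep)
      (Finset.image emb Finset.univ) (sets := fun t => s t.1.1)
      (fun t _ => hs _)
    rw [Finset.set_biInter_finset_image, Finset.prod_image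
      (fun a _ b _ hab => hinj hab)] at h
    have : ⋂ i ∈ Finset.univ, X (emb i) ⁻¹' s (emb i).1.1 = ⋂ i, Xd i ⁻¹' s i := by
      simp [hemb, hXd]
    rw [this] at h
    rw [hpre, h]
    congr 1
    ext i
    rw [Measure.map_apply (hmeas _) (hs i)]
  -- the pushforward computation
  rw [ae_iff]
  have hset : {ω | ¬(B ω).det ≠ 0} = (fun ω => (D ω, W ω)) ⁻¹' (G ⁻¹' {0}) := by
    ext ω
    simp [hBG ω]
  rw [hset, ← Measure.map_apply (hDmeas.prodMk hWmeas) (hGmeas (measurableSet_singleton 0))]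
  rw [(indepFun_iff_map_prod_eq_prod_map_map hDmeas.aemeasurable hWmeas.aemeasurable).mp hindepDW]
  haveI : IsProbabilityMeasure (μ.map W) := Measure.isProbabilityMeasure_map hWmeas.aemeasurable
  haveI : ∀ i, IsProbabilityMeasure (μ.map (Xd i)) :=
    fun i => Measure.isProbabilityMeasure_map (hmeas _).aemeasurable
  rw [hmapD, Measure.prod_apply_symm (hGmeas (measurableSet_singleton 0))]
  have hzero : ∀ w, (Measure.pi fun i => μ.map (Xd i)) ((fun d => (d, w)) ⁻¹' (G ⁻¹' {0})) = 0 := by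
    intro w
    have := det_diag_add_ae_ne_zero n (fun i => μ.map (Xd i)) (fun i => inferInstance)
      (fun i c => by
        rw [Measure.map_apply (hmeas _) (measurableSet_singleton c)]
        exact hatomless _ c)
      (Matrix.of fun i j => if h : (i, j) ∈ S ∧ i ≠ j then w ⟨(i, j), h⟩ else 0)
    convert this using 2
    rfl
  simp [hzero]
end

section
/- Let A be a real symmetric (n+1)×(n+1) matrix that has 0 as an eigenvalue, let p be one of its indices, and let B = A₋ₚ be the principal n×n submatrix obtained by deleting row and column p. Then every nonzero eigenvalue λ of A satisfies |λ| ≥ min{ |μ| : μ an eigenvalue of B }. (In particular, the spectral gap of A around its zero eigenvalue is at least the smallest absolute value of an eigenvalue of B.) -/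
open Matrix

/-- If a real symmetric matrix `B` satisfies `‖B x‖ ≤ c ‖x‖` for some nonzero
vector `x` (phrased with dot products), then `B` has an eigenvalue `μ` with
`|μ| ≤ c`. -/
lemma exists_eigenvalue_abs_le_of_dotProduct_le {ι : Type*} [Fintype ι] [DecidableEq ι]
    (B : Matrix ι ι ℝ) (hB : B.IsHermitian) (x : ι → ℝ) (hx : x ≠ 0) (c : ℝ) (hc : 0 ≤ c)
    (h : (B *ᵥ x) ⬝ᵥ (B *ᵥ x) ≤ c ^ 2 * (x ⬝ᵥ x)) :
    ∃ μ : ℝ, Module.End.HasEigenvalue B.mulVecLin μ ∧ |μ| ≤ c := by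
  classical
  obtain ⟨i1, hi1⟩ : ∃ i, x i ≠ 0 := by
    by_contra hcon
    push_neg at hcon
    exact hx (funext fun i => hcon i)
  haveI : Nonempty ι := ⟨i1⟩
  set b := hB.eigenvectorBasis with hb
  set μ := hB.eigenvalues with hμ
  have hBT : Bᵀ = B := by
    ext i j
    have := congrFun (congrFun hB j) i
    simpa [Matrix.conjTranspose_apply] using this.symm
  -- Parseval identity with the eigenvector basis
  have parseval : ∀ y : ι → ℝ, y ⬝ᵥ y = ∑ j, ((WithLp.equiv 2 (ι → ℝ) (b j)) ⬝ᵥ y) ^ 2 := by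
    intro y
    have h := b.sum_inner_mul_inner ((WithLp.equiv 2 (ι → ℝ)).symm y)
      ((WithLp.equiv 2 (ι → ℝ)).symm y)
    simp only [PiLp.inner_apply, RCLike.inner_apply, starRingEnd_apply, star_trivial,
      WithLp.equiv_symm_apply, WithLp.ofLp_toLp] at h
    have hy : y ⬝ᵥ y = ∑ i, y i * y i := rfl
    rw [hy, ← h]
    apply Finset.sum_congr rfl
    intro j _
    have h1 : (∑ i, y i * b j i) = (WithLp.equiv 2 (ι → ℝ) (b j)) ⬝ᵥ y := by
      simp [dotProduct, mul_comm]
    have h2 : (∑ i, b j i * y i) = (WithLp.equiv 2 (ι → ℝ) (b j)) ⬝ᵥ y := by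
      simp [dotProduct]
    rw [h1, h2, sq]
  -- eigen-equation in dot product form
  have key1 : ∀ j, (WithLp.equiv 2 (ι → ℝ) (b j)) ⬝ᵥ (B *ᵥ x) = μ j * ((WithLp.equiv 2 (ι → ℝ) (b j)) ⬝ᵥ x) := by
    intro j
    rw [Matrix.dotProduct_mulVec]
    have : (WithLp.equiv 2 (ι → ℝ) (b j)) ᵥ* B = B *ᵥ (WithLp.equiv 2 (ι → ℝ) (b j)) := by
      rw [← hBT, Matrix.mulVec_transpose, hBT]
    rw [this, WithLp.equiv_apply, hB.mulVec_eigenvectorBasis j, smul_dotProduct]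
    simp [smul_eq_mul]
    rfl
  obtain ⟨i0, -, hmin⟩ := Finset.exists_min_image Finset.univ (fun i => |μ i|)
    ⟨i1, Finset.mem_univ i1⟩
  have expand : (B *ᵥ x) ⬝ᵥ (B *ᵥ x) = ∑ j, (μ j) ^ 2 * ((WithLp.equiv 2 (ι → ℝ) (b j)) ⬝ᵥ x) ^ 2 := by
    rw [parseval (B *ᵥ x)]
    apply Finset.sum_congr rfl
    intro j _
    rw [key1 j]
    ring
  have lower : (μ i0) ^ 2 * (x ⬝ᵥ x) ≤ (B *ᵥ x) ⬝ᵥ (B *ᵥ x) := by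
    rw [expand, parseval x, Finset.mul_sum]
    apply Finset.sum_le_sum
    intro j _
    have hj := hmin j (Finset.mem_univ j)
    have hsq : (μ i0) ^ 2 ≤ (μ j) ^ 2 := by
      rw [← sq_abs (μ i0), ← sq_abs (μ j)]
      exact pow_le_pow_left₀ (abs_nonneg _) hj 2
    exact mul_le_mul_of_nonneg_right hsq (sq_nonneg _)
  have hxx : 0 < x ⬝ᵥ x := by
    rcases lt_or_eq_of_le (Finset.sum_nonneg fun i _ => mul_self_nonneg (x i)) with h' | h'
    · exact h'
    · exact absurd (dotProduct_self_eq_zero.1 h'.symm) hx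
  have hsq : (μ i0) ^ 2 ≤ c ^ 2 :=
    le_of_mul_le_mul_right (by linarith [le_trans lower h]) hxx
  have habs : |μ i0| ≤ c := by
    nlinarith [sq_abs (μ i0), abs_nonneg (μ i0)]
  refine ⟨μ i0, ?_, habs⟩
  apply Module.End.hasEigenvalue_of_hasEigenvector (x := fun i => b i0 i)
  constructor
  · rw [Module.End.mem_eigenspace_iff, Matrix.mulVecLin_apply]
    exact hB.mulVec_eigenvectorBasis i0
  · intro h0
    exact b.orthonormal.ne_zero i0 (PiLp.ext fun i => congrFun h0 i)

/-- Cauchy interlacing bound on the spectral gap around zero: if the real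
symmetric matrix `A` has `0` as an eigenvalue, then every nonzero eigenvalue `λ`
of `A` satisfies `|λ| ≥ min { |μ| : μ eigenvalue of A₋ₚ }`. -/
theorem gap_ge_min_abs_eigenvalue_of_principal_submatrix (n : ℕ)
    (A : Matrix (Fin (n + 1)) (Fin (n + 1)) ℝ) (hsymm : A.IsSymm)
    (h0 : Module.End.HasEigenvalue A.mulVecLin (0 : ℝ))
    (p : Fin (n + 1)) :
    ∀ lam : ℝ, lam ≠ 0 → Module.End.HasEigenvalue A.mulVecLin lam →
      sInf {r : ℝ | ∃ μ : ℝ,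
          Module.End.HasEigenvalue
            ((A.submatrix
              (fun i : {w : Fin (n + 1) // w ≠ p} => (i : Fin (n + 1)))
              (fun j : {w : Fin (n + 1) // w ≠ p} => (j : Fin (n + 1)))).mulVecLin) μ ∧
          r = |μ|} ≤ |lam| := by
  classical
  intro lam hlam hev
  set B := A.submatrix
      (fun i : {w : Fin (n + 1) // w ≠ p} => (i : Fin (n + 1)))
      (fun j : {w : Fin (n + 1) // w ≠ p} => (j : Fin (n + 1))) with hBdef
  have hAT : Aᵀ = A := hsymm
  have hBH : B.IsHermitian := by
    ext i j
    simp only [hBdef, Matrix.conjTranspose_apply, Matrix.submatrix_apply, star_trivial]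
    exact (congrFun (congrFun hAT j.1) i.1 : Aᵀ j.1 i.1 = A j.1 i.1).symm ▸
      (congrFun (congrFun hAT i.1) j.1).symm ▸ (by
        have := congrFun (congrFun hAT i.1) j.1
        simpa [Matrix.transpose_apply] using this.symm)
  -- eigenvectors
  obtain ⟨u, hu⟩ := h0.exists_hasEigenvector
  obtain ⟨v, hv⟩ := hev.exists_hasEigenvector
  have hu0 : A *ᵥ u = 0 := by
    have := Module.End.mem_eigenspace_iff.1 hu.1
    simpa [Matrix.mulVecLin_apply] using this
  have hvlam : A *ᵥ v = lam • v := by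
    have := Module.End.mem_eigenspace_iff.1 hv.1
    simpa [Matrix.mulVecLin_apply] using this
  have hune : u ≠ 0 := hu.2
  have hvne : v ≠ 0 := hv.2
  -- orthogonality
  have orth : u ⬝ᵥ v = 0 := by
    have h1 : lam * (u ⬝ᵥ v) = 0 := by
      calc lam * (u ⬝ᵥ v) = u ⬝ᵥ (lam • v) := by
            rw [dotProduct_smul]; simp [smul_eq_mul]
        _ = u ⬝ᵥ (A *ᵥ v) := by rw [hvlam]
        _ = (u ᵥ* A) ⬝ᵥ v := Matrix.dotProduct_mulVec u A v
        _ = (A *ᵥ u) ⬝ᵥ v := by rw [← Matrix.mulVec_transpose, hAT]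
        _ = 0 := by rw [hu0]; simp
    exact (mul_eq_zero.1 h1).resolve_left hlam
  have huu : 0 < u ⬝ᵥ u := by
    rcases lt_or_eq_of_le (Finset.sum_nonneg fun i _ => mul_self_nonneg (u i)) with h' | h'
    · exact h'
    · exact absurd (dotProduct_self_eq_zero.1 h'.symm) hune
  -- construct test vector w with w p = 0, w ≠ 0, ‖A w‖ ≤ |lam| ‖w‖
  have hmain : ∃ w : Fin (n + 1) → ℝ, w ≠ 0 ∧ w p = 0 ∧
      (A *ᵥ w) ⬝ᵥ (A *ᵥ w) ≤ lam ^ 2 * (w ⬝ᵥ w) := by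
    by_cases hvp : v p = 0
    · refine ⟨v, hvne, hvp, ?_⟩
      rw [hvlam, smul_dotProduct, dotProduct_smul]
      simp [smul_eq_mul]
      nlinarith [Finset.sum_nonneg (fun i (_ : i ∈ Finset.univ) => mul_self_nonneg (v i))]
    · refine ⟨v p • u - u p • v, ?_, ?_, ?_⟩
      · intro hw
        have h2 : (v p • u - u p • v) ⬝ᵥ u = 0 := by rw [hw]; simp
        simp only [sub_dotProduct, smul_dotProduct, smul_eq_mul,
          dotProduct_comm v u, orth, mul_zero, sub_zero] at h2
        exact hvp ((mul_eq_zero.1 h2).resolve_right (ne_of_gt huu))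
      · simp [smul_eq_mul]; ring
      · have hAw : A *ᵥ (v p • u - u p • v) = (-(u p) * lam) • v := by
          rw [Matrix.mulVec_sub, Matrix.mulVec_smul, Matrix.mulVec_smul, hu0, hvlam, smul_zero]
          funext i
          simp [smul_eq_mul]
          ring
        rw [hAw, smul_dotProduct, dotProduct_smul]
        have hww : (v p • u - u p • v) ⬝ᵥ (v p • u - u p • v)
            = (v p) ^ 2 * (u ⬝ᵥ u) + (u p) ^ 2 * (v ⬝ᵥ v) := by
          simp only [sub_dotProduct, dotProduct_sub, smul_dotProduct,
            dotProduct_smul, smul_eq_mul, dotProduct_comm v u, orth,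
            mul_zero, zero_mul, sub_zero, zero_sub]
          ring
        rw [hww]
        simp only [smul_eq_mul]
        have hpos : 0 ≤ lam ^ 2 * (v p) ^ 2 * (u ⬝ᵥ u) := by positivity
        nlinarith [hpos]
  obtain ⟨w, hwne, hwp, hwbound⟩ := hmain
  -- restrict to the subtype
  set x : {w : Fin (n + 1) // w ≠ p} → ℝ := fun j => w j.1 with hxdef
  have hsub : ∀ f : Fin (n + 1) → ℝ,
      ∑ j : {w : Fin (n + 1) // w ≠ p}, f j.1 = ∑ j ∈ Finset.univ.erase p, f j := by
    intro f
    exact (Finset.sum_subtype (Finset.univ.erase p)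
      (fun x => by simp [Finset.mem_erase]) f).symm
  have herase : ∀ f : Fin (n + 1) → ℝ,
      ∑ j ∈ Finset.univ.erase p, f j = (∑ j, f j) - f p := by
    intro f
    have := Finset.add_sum_erase Finset.univ f (Finset.mem_univ p)
    linarith
  have hxne : x ≠ 0 := by
    intro hx0
    apply hwne
    funext i
    by_cases hip : i = p
    · rw [hip, hwp]; rfl
    · exact congrFun hx0 ⟨i, hip⟩
  have hBx : ∀ i : {w : Fin (n + 1) // w ≠ p}, (B *ᵥ x) i = (A *ᵥ w) i.1 := by
    intro i
    show (∑ j : {w : Fin (n + 1) // w ≠ p}, A i.1 j.1 * w j.1) = ∑ j, A i.1 j * w j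
    rw [hsub (fun j => A i.1 j * w j), herase]
    rw [hwp, mul_zero, sub_zero]
  have hxx : x ⬝ᵥ x = w ⬝ᵥ w := by
    show (∑ j : {w : Fin (n + 1) // w ≠ p}, w j.1 * w j.1) = ∑ j, w j * w j
    rw [hsub (fun j => w j * w j), herase, hwp, mul_zero, sub_zero]
  have hBxx : (B *ᵥ x) ⬝ᵥ (B *ᵥ x) ≤ (A *ᵥ w) ⬝ᵥ (A *ᵥ w) := by
    have h1 : (B *ᵥ x) ⬝ᵥ (B *ᵥ x)
        = ∑ j ∈ Finset.univ.erase p, (A *ᵥ w) j * (A *ᵥ w) j := by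
      rw [show (B *ᵥ x) ⬝ᵥ (B *ᵥ x)
          = ∑ j : {w : Fin (n + 1) // w ≠ p}, (A *ᵥ w) j.1 * (A *ᵥ w) j.1 from
        Finset.sum_congr rfl fun j _ => by rw [hBx j]]
      exact hsub (fun j => (A *ᵥ w) j * (A *ᵥ w) j)
    rw [h1]
    exact Finset.sum_le_sum_of_subset_of_nonneg (Finset.erase_subset p Finset.univ)
      (fun i _ _ => mul_self_nonneg _)
  have hkey : (B *ᵥ x) ⬝ᵥ (B *ᵥ x) ≤ |lam| ^ 2 * (x ⬝ᵥ x) := by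
    rw [hxx, sq_abs]
    exact le_trans hBxx hwbound
  obtain ⟨μ, hμev, hμle⟩ := exists_eigenvalue_abs_le_of_dotProduct_le B hBH x hxne |lam|
    (abs_nonneg lam) hkey
  have hmem : |μ| ∈ {r : ℝ | ∃ μ : ℝ, Module.End.HasEigenvalue B.mulVecLin μ ∧ r = |μ|} :=
    ⟨μ, hμev, rfl⟩
  have hbdd : BddBelow {r : ℝ | ∃ μ : ℝ, Module.End.HasEigenvalue B.mulVecLin μ ∧ r = |μ|} :=
    ⟨0, fun r ⟨μ', _, hr⟩ => hr ▸ abs_nonneg μ'⟩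
  exact le_trans (csInf_le hbdd hmem) hμle
end

section
/- Let T be a finite tree (a connected acyclic simple graph) with nonempty vertex set V and edge set E. Then the subspace K = { x : V → ℝ | x_u + x_v = 0 for every edge uv ∈ E } of ℝ^V is exactly one-dimensional, and every nonzero x ∈ K satisfies x_v ≠ 0 for every vertex v ∈ V. (Equivalently: the adjacency matrix of the subdivision of T, which has block form [[0, N], [Nᵀ, 0]] with N the unsigned vertex-edge incidence matrix of T, has a one-dimensional kernel, spanned by a vector that is nonzero on every original vertex of T.) -/
open SimpleGraph Walk

private lemma isPath_concat' {V : Type*} {G : SimpleGraph V} {u v w : V}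
    {p : G.Walk u v} (hp : p.IsPath) (h : G.Adj v w) (hw : w ∉ p.support) :
    (p.concat h).IsPath := by
  rw [← isPath_reverse_iff, reverse_concat]
  exact hp.reverse.cons (by simpa using hw)

/-- Alternation along a walk. -/
private lemma walk_alt {V : Type*} {G : SimpleGraph V} (y : V → ℝ)
    (hy : ∀ u v : V, G.Adj u v → y u + y v = 0) :
    ∀ {a b : V} (w : G.Walk a b), y b = (-1 : ℝ) ^ w.length * y a := by
  intro a b w
  induction w with
  | nil => simp
  | cons h p ih =>
    rename_i u' v' w' 
    have h1 : y v' = - y u' := by linarith [hy _ _ h]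
    rw [length_cons, pow_succ, ih, h1]; ring

/-- For a finite tree `T`, the space `K = {x : V → ℝ | x u + x v = 0 for every
edge uv}` is exactly one-dimensional, and every nonzero element of `K` is
nonzero at every vertex. -/
theorem tree_kernel_one_dimensional {V : Type*} [Fintype V] [Nonempty V]
    (G : SimpleGraph V) (hT : G.IsTree) :
    ∃ x : V → ℝ, x ≠ 0 ∧ (∀ u v : V, G.Adj u v → x u + x v = 0) ∧
      (∀ y : V → ℝ, (∀ u v : V, G.Adj u v → y u + y v = 0) → ∃ c : ℝ, y = c • x) ∧
      (∀ y : V → ℝ, (∀ u v : V, G.Adj u v → y u + y v = 0) → y ≠ 0 →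
        ∀ v : V, y v ≠ 0) := by
  classical
  obtain ⟨r⟩ := ‹Nonempty V›
  choose P hP hP' using (hT.existsUnique_path r ·)
  -- the unique path to r itself is nil
  have hPr : (P r).length = 0 := by
    have := hP' r Walk.nil IsPath.nil
    rw [← this]; rfl
  -- adjacent vertices have path lengths differing by one
  have key : ∀ u v : V, G.Adj u v →
      (P v).length = (P u).length + 1 ∨ (P u).length = (P v).length + 1 := by
    intro u v h
    by_cases hv : v ∈ (P u).support
    · right
      -- take the prefix of P u up to v, then step to u
      have hvu : v ≠ u := h.ne'
      have htake : ((P u).takeUntil v hv).IsPath := (hP u).takeUntil hv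
      have hu_not : u ∉ ((P u).takeUntil v hv).support := by
        intro hu
        -- u would appear twice in (P u).support
        have hnd : (P u).support.Nodup := (hP u).support_nodup
        have hspec := (P u).take_spec hv
        rw [← hspec, support_append] at hnd
        have hu2 : u ∈ ((P u).dropUntil v hv).support.tail :=
          end_mem_tail_support_of_ne hvu _
        exact (List.disjoint_of_nodup_append hnd) hu hu2
      have hpath : (((P u).takeUntil v hv).concat h.symm).IsPath :=
        isPath_concat' htake h.symm hu_not
      have := hP' u _ hpath
      rw [← this, length_concat]
      have hPv : (P u).takeUntil v hv = P v := hP' v _ htake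
      rw [hPv]
    · left
      have hpath : ((P u).concat h).IsPath := isPath_concat' (hP u) h hv
      have := hP' v _ hpath
      rw [← this, length_concat]
  set x : V → ℝ := fun v => (-1 : ℝ) ^ (P v).length with hx
  have hxsol : ∀ u v : V, G.Adj u v → x u + x v = 0 := by
    intro u v h
    rcases key u v h with h1 | h1 <;> simp [hx, h1, pow_succ]
  have hxr : x r = 1 := by simp [hx, hPr]
  -- every solution is a multiple of x
  have huniq : ∀ y : V → ℝ, (∀ u v : V, G.Adj u v → y u + y v = 0) →
      ∀ v : V, y v = y r * x v := by
    intro y hy v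
    have := walk_alt y hy (P v)
    rw [this, hx]; ring
  refine ⟨x, ?_, hxsol, ?_, ?_⟩
  · intro h0
    have := congrFun h0 r
    rw [hxr] at this; simp at this
  · intro y hy
    exact ⟨y r, funext fun v => by simpa using huniq y hy v⟩
  · intro y hy hy0 v
    have hyr : y r ≠ 0 := by
      intro h
      apply hy0
      funext w
      have := huniq y hy w
      rw [h] at this; simpa using this
    have := huniq y hy v
    rw [this]
    refine mul_ne_zero hyr ?_
    simp [hx]
end
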